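/- arXiv:2505.00544 — 7 statements merged into one kernel-verified Lean document; each statement's English description precedes it below -/
import Mathlib

section
/- Let p be a univariate real polynomial of degree at most d. Then ‖p‖_∞ ≤ ‖p‖_{1,cheb} ≤ √(2(d+1)) · ‖p‖_∞. -/
set_option maxHeartbeats 1000000


open Polynomial

private lemma integral_cos_int (m : ℤ) :
    ∫ θ in (0:ℝ)..Real.pi, Real.cos (m * θ) = if m = 0 then Real.pi else 0 := by
  rcases eq_or_ne m 0 with h | h
  · simp [h]
  · rw [if_neg h]
    have hm : (m : ℝ) ≠ 0 := Int.cast_ne_zero.mpr h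
    have := intervalIntegral.mul_integral_comp_mul_left (a := (0:ℝ)) (b := Real.pi)
      (f := Real.cos) (c := (m:ℝ))
    have h2 : ∫ x in ((m:ℝ) * 0)..((m:ℝ) * Real.pi), Real.cos x = 0 := by
      rw [integral_cos]
      simp [Real.sin_int_mul_pi]
    rw [h2] at this
    rcases mul_eq_zero.mp this with h3 | h3
    · exact absurd h3 hm
    · exact h3

private lemma orth (j k : ℕ) :
    ∫ θ in (0:ℝ)..Real.pi, Real.cos (j * θ) * Real.cos (k * θ) =
      if j = k then (if k = 0 then Real.pi else Real.pi / 2) else 0 := by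
  have expand : ∀ θ : ℝ, Real.cos (j * θ) * Real.cos (k * θ)
      = (Real.cos ((((j:ℤ) - k : ℤ) : ℝ) * θ) + Real.cos ((((j:ℤ) + k : ℤ) : ℝ) * θ)) / 2 := by
    intro θ
    have h := Real.two_mul_cos_mul_cos ((j:ℝ) * θ) ((k:ℝ) * θ)
    have h1 : (j:ℝ) * θ - (k:ℝ) * θ = (((j:ℤ) - k : ℤ) : ℝ) * θ := by push_cast; ring
    have h2 : (j:ℝ) * θ + (k:ℝ) * θ = (((j:ℤ) + k : ℤ) : ℝ) * θ := by push_cast; ring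
    rw [h1, h2] at h
    linarith
  rw [intervalIntegral.integral_congr (g := fun θ =>
      (Real.cos ((((j:ℤ) - k : ℤ) : ℝ) * θ) + Real.cos ((((j:ℤ) + k : ℤ) : ℝ) * θ)) / 2)
      (fun θ _ => expand θ)]
  have hi1 : IntervalIntegrable (fun θ => Real.cos ((((j:ℤ) - k : ℤ) : ℝ) * θ))
      MeasureTheory.volume 0 Real.pi :=
    (Real.continuous_cos.comp (continuous_const.mul continuous_id)).intervalIntegrable _ _
  have hi2 : IntervalIntegrable (fun θ => Real.cos ((((j:ℤ) + k : ℤ) : ℝ) * θ))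
      MeasureTheory.volume 0 Real.pi :=
    (Real.continuous_cos.comp (continuous_const.mul continuous_id)).intervalIntegrable _ _
  rw [intervalIntegral.integral_div, intervalIntegral.integral_add hi1 hi2,
    integral_cos_int, integral_cos_int]
  rcases eq_or_ne j k with h | h
  · subst h
    rcases eq_or_ne j 0 with h0 | h0
    · subst h0; norm_num
    · have : ((j:ℤ) + j ≠ 0) := by positivity
      simp [this, h0]
  · have h1 : (j:ℤ) - k ≠ 0 := by
      intro hc; exact h (by omega)
    have h2 : (j:ℤ) + k ≠ 0 ∨ ((j:ℤ) + k = 0 ∧ j = k) := by omega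
    rcases eq_or_ne ((j:ℤ) + k) 0 with h3 | h3
    · have : j = 0 ∧ k = 0 := by omega
      exact absurd (by omega : j = k) h
    · simp [h1, h3, h]

/-- For a univariate real polynomial `p` of degree at most `d`, written in the
Chebyshev basis as `p = ∑_{k=0}^d c_k T_k`, one has
`‖p‖_∞ ≤ ‖p‖_{1,cheb} ≤ √(2(d+1)) ‖p‖_∞`, where `‖p‖_∞ = sup_{x ∈ [-1,1]} |p(x)|` and
`‖p‖_{1,cheb} = ∑_{k=0}^d |c_k|`. -/
theorem cheb_norm_comparison (d : ℕ) (p : Polynomial ℝ) (c : ℕ → ℝ)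
    (hp : p = ∑ k ∈ Finset.range (d + 1), c k • Chebyshev.T ℝ k) :
    (⨆ x : Set.Icc (-1 : ℝ) 1, |p.eval (x : ℝ)|) ≤ ∑ k ∈ Finset.range (d + 1), |c k| ∧
      ∑ k ∈ Finset.range (d + 1), |c k| ≤
        Real.sqrt (2 * (d + 1)) * ⨆ x : Set.Icc (-1 : ℝ) 1, |p.eval (x : ℝ)| := by
  haveI : Nonempty (Set.Icc (-1 : ℝ) 1) := ⟨⟨0, by norm_num⟩⟩
  set S : ℝ := ⨆ x : Set.Icc (-1 : ℝ) 1, |p.eval (x : ℝ)| with hSdef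
  have hbdd : BddAbove (Set.range fun x : Set.Icc (-1 : ℝ) 1 => |p.eval (x : ℝ)|) := by
    have : (Set.range fun x : Set.Icc (-1 : ℝ) 1 => |p.eval (x : ℝ)|)
        = (fun x : ℝ => |p.eval x|) '' Set.Icc (-1 : ℝ) 1 := by
      ext y
      simp [Set.mem_image]
    rw [this]
    exact (isCompact_Icc.image p.continuous.abs).bddAbove
  have hSle : ∀ x : ℝ, x ∈ Set.Icc (-1 : ℝ) 1 → |p.eval x| ≤ S := by
    intro x hx
    exact le_ciSup hbdd (⟨x, hx⟩ : Set.Icc (-1 : ℝ) 1)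
  have hS0 : 0 ≤ S := le_trans (abs_nonneg _) (hSle 0 (by norm_num))
  -- pointwise expansion
  have hg : ∀ θ : ℝ, p.eval (Real.cos θ)
      = ∑ j ∈ Finset.range (d + 1), c j * Real.cos (j * θ) := by
    intro θ
    rw [hp, eval_finset_sum]
    refine Finset.sum_congr rfl fun j _ => ?_
    rw [eval_smul, smul_eq_mul, Polynomial.Chebyshev.T_real_cos]
    push_cast
    ring_nf
  -- Part 1
  have part1 : S ≤ ∑ k ∈ Finset.range (d + 1), |c k| := by
    refine ciSup_le fun x => ?_
    obtain ⟨x, hx⟩ := x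
    have hx' : p.eval x = ∑ j ∈ Finset.range (d + 1), c j * Real.cos (j * Real.arccos x) := by
      conv_lhs => rw [← Real.cos_arccos hx.1 hx.2]
      exact hg (Real.arccos x)
    calc |p.eval x| = |∑ j ∈ Finset.range (d + 1), c j * Real.cos (j * Real.arccos x)| := by
          rw [hx']
      _ ≤ ∑ j ∈ Finset.range (d + 1), |c j * Real.cos (j * Real.arccos x)| :=
          Finset.abs_sum_le_sum_abs _ _
      _ ≤ ∑ j ∈ Finset.range (d + 1), |c j| := by
          refine Finset.sum_le_sum fun j _ => ?_
          rw [abs_mul]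
          exact mul_le_of_le_one_right (abs_nonneg _) (Real.abs_cos_le_one _)
  refine ⟨part1, ?_⟩
  -- Part 2
  set w : ℕ → ℝ := fun k => if k = 0 then Real.pi else Real.pi / 2 with hw
  have hcont : ∀ k : ℕ, Continuous fun θ : ℝ => p.eval (Real.cos θ) * Real.cos (k * θ) := by
    intro k
    exact (p.continuous.comp Real.continuous_cos).mul
      (Real.continuous_cos.comp (continuous_const.mul continuous_id))
  have hcoef : ∀ k ∈ Finset.range (d + 1),
      ∫ θ in (0:ℝ)..Real.pi, p.eval (Real.cos θ) * Real.cos (k * θ) = c k * w k := by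
    intro k hk
    have step1 : ∫ θ in (0:ℝ)..Real.pi, p.eval (Real.cos θ) * Real.cos (k * θ)
        = ∑ j ∈ Finset.range (d + 1),
            ∫ θ in (0:ℝ)..Real.pi, c j * (Real.cos (j * θ) * Real.cos (k * θ)) := by
      rw [← intervalIntegral.integral_finset_sum]
      · refine intervalIntegral.integral_congr fun θ _ => ?_
        rw [hg θ, Finset.sum_mul]
        exact Finset.sum_congr rfl fun j _ => by ring
      · intro j _
        exact (continuous_const.mul ((Real.continuous_cos.comp
          (continuous_const.mul continuous_id)).mul (Real.continuous_cos.comp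
          (continuous_const.mul continuous_id)))).intervalIntegrable _ _
    rw [step1]
    have step2 : ∀ j ∈ Finset.range (d + 1),
        ∫ θ in (0:ℝ)..Real.pi, c j * (Real.cos (j * θ) * Real.cos (k * θ))
          = c j * (if j = k then w k else 0) := by
      intro j _
      rw [intervalIntegral.integral_const_mul, orth j k, hw]
    rw [Finset.sum_congr rfl step2, Finset.sum_eq_single k]
    · simp
    · intro j _ hjk; simp [hjk]
    · intro h; exact absurd hk h
  -- Parseval
  have hpar : ∫ θ in (0:ℝ)..Real.pi, (p.eval (Real.cos θ))^2
      = ∑ k ∈ Finset.range (d + 1), c k ^ 2 * w k := by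
    have step1 : ∫ θ in (0:ℝ)..Real.pi, (p.eval (Real.cos θ))^2
        = ∑ k ∈ Finset.range (d + 1),
            ∫ θ in (0:ℝ)..Real.pi, c k * (p.eval (Real.cos θ) * Real.cos (k * θ)) := by
      rw [← intervalIntegral.integral_finset_sum]
      · refine intervalIntegral.integral_congr fun θ _ => ?_
        rw [sq]
        nth_rewrite 2 [hg θ]
        rw [Finset.mul_sum]
        exact Finset.sum_congr rfl fun j _ => by ring
      · intro k _
        exact (continuous_const.mul (hcont k)).intervalIntegrable _ _
    rw [step1]
    refine Finset.sum_congr rfl fun k hk => ?_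
    rw [intervalIntegral.integral_const_mul, hcoef k hk]
    ring
  -- bound on integral
  have hbound : ∫ θ in (0:ℝ)..Real.pi, (p.eval (Real.cos θ))^2 ≤ Real.pi * S^2 := by
    have h1 : ∫ θ in (0:ℝ)..Real.pi, (fun _ : ℝ => S^2) θ = Real.pi * S^2 := by
      simp [mul_comm]
    rw [← h1]
    have hii : IntervalIntegrable (fun θ : ℝ => (p.eval (Real.cos θ))^2)
        MeasureTheory.volume 0 Real.pi :=
      ((p.continuous.comp Real.continuous_cos).pow 2).intervalIntegrable 0 Real.pi
    refine intervalIntegral.integral_mono_on Real.pi_pos.le hii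
      ((continuous_const : Continuous fun _ : ℝ => S^2).intervalIntegrable 0 Real.pi)
      fun θ _ => ?_
    have hcos : Real.cos θ ∈ Set.Icc (-1:ℝ) 1 := ⟨Real.neg_one_le_cos θ, Real.cos_le_one θ⟩
    calc (p.eval (Real.cos θ))^2 = |p.eval (Real.cos θ)|^2 := (sq_abs _).symm
      _ ≤ S^2 := by
          have := hSle _ hcos
          exact pow_le_pow_left₀ (abs_nonneg _) this 2
  -- sum of squares bound
  have hsq : ∑ k ∈ Finset.range (d + 1), c k ^ 2 ≤ 2 * S^2 := by
    have h1 : (Real.pi / 2) * ∑ k ∈ Finset.range (d + 1), c k ^ 2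
        ≤ ∑ k ∈ Finset.range (d + 1), c k ^ 2 * w k := by
      rw [Finset.mul_sum]
      refine Finset.sum_le_sum fun k _ => ?_
      rw [hw]
      rcases eq_or_ne k 0 with h | h
      · simp only [h, if_pos rfl, eq_self_iff_true, if_true]
        nlinarith [mul_nonneg Real.pi_pos.le (sq_nonneg (c 0))]
      · simp only [if_neg h]
        exact le_of_eq (by ring)
    have h2 : (Real.pi / 2) * ∑ k ∈ Finset.range (d + 1), c k ^ 2 ≤ Real.pi * S^2 := by
      calc _ ≤ ∑ k ∈ Finset.range (d + 1), c k ^ 2 * w k := h1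
        _ = ∫ θ in (0:ℝ)..Real.pi, (p.eval (Real.cos θ))^2 := hpar.symm
        _ ≤ Real.pi * S^2 := hbound
    nlinarith [Real.pi_pos]
  -- Cauchy-Schwarz
  have hcs : (∑ k ∈ Finset.range (d + 1), |c k|)^2
      ≤ (d + 1 : ℝ) * ∑ k ∈ Finset.range (d + 1), c k ^ 2 := by
    have := Finset.sum_mul_sq_le_sq_mul_sq (Finset.range (d + 1)) (fun _ => (1:ℝ))
      (fun k => |c k|)
    simp only [one_mul, one_pow, Finset.sum_const, Finset.card_range, nsmul_eq_mul,
      mul_one, sq_abs] at this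
    calc (∑ k ∈ Finset.range (d + 1), |c k|)^2
        ≤ (↑(d + 1) : ℝ) * ∑ k ∈ Finset.range (d + 1), c k ^ 2 := this
      _ = (d + 1 : ℝ) * ∑ k ∈ Finset.range (d + 1), c k ^ 2 := by push_cast; ring
  -- conclude
  have hfinal : (∑ k ∈ Finset.range (d + 1), |c k|)^2 ≤ 2 * (d + 1 : ℝ) * S^2 := by
    calc (∑ k ∈ Finset.range (d + 1), |c k|)^2
        ≤ (d + 1 : ℝ) * ∑ k ∈ Finset.range (d + 1), c k ^ 2 := hcs
      _ ≤ (d + 1 : ℝ) * (2 * S^2) := by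
          refine mul_le_mul_of_nonneg_left hsq (by positivity)
      _ = 2 * (d + 1 : ℝ) * S^2 := by ring
  have hsum_nonneg : 0 ≤ ∑ k ∈ Finset.range (d + 1), |c k| :=
    Finset.sum_nonneg fun k _ => abs_nonneg _
  have : ∑ k ∈ Finset.range (d + 1), |c k| ≤ Real.sqrt (2 * (d + 1) * S^2) := by
    rw [Real.le_sqrt hsum_nonneg (by positivity)]
    exact_mod_cast hfinal
  calc ∑ k ∈ Finset.range (d + 1), |c k| ≤ Real.sqrt (2 * (d + 1) * S^2) := this
    _ = Real.sqrt (2 * (d + 1)) * S := by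
        rw [Real.sqrt_mul (by positivity), Real.sqrt_sq hS0]
end

section
/- Let p ∈ ℝ[x_1,…,x_n] be a polynomial. Then ‖p‖_{1,cheb} − p belongs to Q(1−x_1², 1−x_2², …, 1−x_n²)_{2·deg(p)}. -/
open Polynomial Finset

/-- The multivariate Chebyshev polynomial `T_α(x) = ∏ i, T_{α i}(x_i)`. -/
noncomputable def chebMv {n : ℕ} (α : Fin n → ℕ) : MvPolynomial (Fin n) ℝ :=
  ∏ i, Polynomial.aeval (MvPolynomial.X i) (Polynomial.Chebyshev.T ℝ (α i))

/-- Membership in the truncated quadratic module `Q(1-x₁², …, 1-xₙ²)_r`. -/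
def memCubeQM (n r : ℕ) (p : MvPolynomial (Fin n) ℝ) : Prop :=
  ∃ (σ₀ : MvPolynomial (Fin n) ℝ) (σ : Fin n → MvPolynomial (Fin n) ℝ),
    IsSumSq σ₀ ∧ (∀ i, IsSumSq (σ i)) ∧ σ₀.totalDegree ≤ r ∧
    (∀ i, (σ i).totalDegree ≤ r - 2) ∧
    p = σ₀ + ∑ i, (1 - MvPolynomial.X i ^ 2) * σ i

section Aux
variable {n : ℕ}

-- Pell-type identity for Chebyshev polynomials
lemma pellT (k : ℕ) : (Chebyshev.T ℝ k)^2 - 1 = ((X:ℝ[X])^2 - 1) * Chebyshev.U ℝ ((k:ℤ)-1)^2 := by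
  induction k with
  | zero => simp [Chebyshev.T_zero, Chebyshev.U_neg_one]
  | succ k ih =>
    have hT : Chebyshev.T ℝ ((k:ℤ)+1) = X * Chebyshev.T ℝ k + ((X:ℝ[X])^2-1) * Chebyshev.U ℝ ((k:ℤ)-1) := by
      have := Chebyshev.T_eq_X_mul_T_sub_pol_U ℝ ((k:ℤ)-1)
      simp only [sub_add_cancel] at this
      rw [show ((k:ℤ)-1+2) = (k:ℤ)+1 by ring] at this
      rw [this]; ring
    have hU : Chebyshev.U ℝ (k:ℤ) = X * Chebyshev.U ℝ ((k:ℤ)-1) + Chebyshev.T ℝ k := by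
      have := Chebyshev.U_eq_X_mul_U_add_T ℝ ((k:ℤ)-1)
      rw [show ((k:ℤ)-1+1) = (k:ℤ) by ring] at this
      exact this
    push_cast
    rw [show ((k:ℤ)+1-1) = (k:ℤ) by ring, hT, hU]
    linear_combination ih
open Polynomial Finset

lemma T_deg_coeff (k : ℕ) : (Chebyshev.T ℝ (k:ℤ)).natDegree ≤ k ∧ (Chebyshev.T ℝ (k:ℤ)).coeff k = 2^(k-1) := by
  induction k using Nat.twoStepInduction with
  | zero => simp [Chebyshev.T_zero]
  | one => simp [Chebyshev.T_one]
  | more k ih1 ih2 =>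
    have hrec : Chebyshev.T ℝ ((k:ℤ)+2) = 2 * X * Chebyshev.T ℝ ((k:ℤ)+1) - Chebyshev.T ℝ k :=
      Chebyshev.T_add_two ℝ k
    push_cast
    constructor
    · rw [hrec]
      refine le_trans (natDegree_sub_le _ _) (max_le ?_ (le_trans ih1.1 (by omega)))
      calc (2 * X * Chebyshev.T ℝ ((k:ℤ)+1)).natDegree
          ≤ (2 * X : ℝ[X]).natDegree + (Chebyshev.T ℝ ((k:ℤ)+1)).natDegree := natDegree_mul_le
        _ ≤ 1 + (k+1) := by
            have : ((2:ℝ[X]) * X).natDegree ≤ 1 := natDegree_mul_le.trans (by simp)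
            have h2 := ih2.1; push_cast at h2; omega
        _ = k + 2 := by ring
    · rw [hrec, coeff_sub]
      have h0 : (Chebyshev.T ℝ (k:ℤ)).coeff (k+2) = 0 :=
        coeff_eq_zero_of_natDegree_lt (by omega)
      have h1 : (2 * X * Chebyshev.T ℝ ((k:ℤ)+1)).coeff (k+2) = 2 * (Chebyshev.T ℝ ((k:ℤ)+1)).coeff (k+1) := by
        rw [mul_assoc, coeff_ofNat_mul, coeff_X_mul]
      rw [h0, h1]
      have h2 := ih2.2; push_cast at h2; rw [h2]
      ring
open Polynomial Finset

lemma U_deg (k : ℕ) : (Chebyshev.U ℝ (k:ℤ)).natDegree ≤ k := by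
  induction k using Nat.twoStepInduction with
  | zero => simp [Chebyshev.U_zero]
  | one => rw [Nat.cast_one, Chebyshev.U_one]; exact le_trans (natDegree_mul_le) (by simp)
  | more k ih1 ih2 =>
    have hrec : Chebyshev.U ℝ ((k:ℤ)+2) = 2 * X * Chebyshev.U ℝ ((k:ℤ)+1) - Chebyshev.U ℝ k :=
      Chebyshev.U_add_two ℝ k
    push_cast
    rw [hrec]
    refine le_trans (natDegree_sub_le _ _) (max_le ?_ (le_trans ih1 (by omega)))
    calc (2 * X * Chebyshev.U ℝ ((k:ℤ)+1)).natDegree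
        ≤ (2 * X : ℝ[X]).natDegree + (Chebyshev.U ℝ ((k:ℤ)+1)).natDegree := natDegree_mul_le
      _ ≤ 1 + (k+1) := by
          have : ((2:ℝ[X]) * X).natDegree ≤ 1 := natDegree_mul_le.trans (by simp)
          push_cast at ih2; omega
      _ = k + 2 := by ring
open Polynomial Finset

variable {n : ℕ}

lemma aeval_X_eq_sum (i : Fin n) (q : ℝ[X]) :
    Polynomial.aeval (MvPolynomial.X i) q
      = ∑ k ∈ q.support, MvPolynomial.monomial (Finsupp.single i k) (q.coeff k) := by
  rw [Polynomial.aeval_def, Polynomial.eval₂_eq_sum, Polynomial.sum]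
  exact Finset.sum_congr rfl fun k _ => MvPolynomial.C_mul_X_pow_eq_monomial

lemma totalDegree_aeval_X_le (i : Fin n) (q : ℝ[X]) :
    (Polynomial.aeval (MvPolynomial.X i) q : MvPolynomial (Fin n) ℝ).totalDegree ≤ q.natDegree := by
  rw [aeval_X_eq_sum]
  refine MvPolynomial.totalDegree_finsetSum_le fun k hk => le_trans (MvPolynomial.totalDegree_monomial_le _ _) ?_
  rw [Finsupp.sum_single_index]
  · exact Polynomial.le_natDegree_of_mem_supp k hk
  · rfl

lemma prod_monomial {ι : Type*} (s : Finset ι) (d : ι → (Fin n →₀ ℕ)) (a : ι → ℝ) :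
    ∏ i ∈ s, MvPolynomial.monomial (d i) (a i)
      = MvPolynomial.monomial (∑ i ∈ s, d i) (∏ i ∈ s, a i) := by
  induction s using Finset.cons_induction with
  | empty => simp
  | cons j s hj ih => rw [Finset.prod_cons, ih, MvPolynomial.monomial_mul, Finset.sum_cons, Finset.prod_cons]
open Polynomial Finset

variable {n : ℕ}


lemma sum_single_eq_finsupp (g : Fin n → ℕ) (D : Fin n →₀ ℕ) :
    (∑ i, Finsupp.single i (g i)) = D ↔ g = ⇑D := by
  constructor
  · intro h
    funext j
    have := congrArg (fun F => F j) h
    simpa [Finsupp.finset_sum_apply, Finsupp.single_apply, Finset.sum_ite_eq' Finset.univ j] using this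
  · intro h
    ext j
    subst h
    simp [Finsupp.finset_sum_apply, Finsupp.single_apply, Finset.sum_ite_eq' Finset.univ j]

lemma coeff_chebMv (β : Fin n → ℕ) (D : Fin n →₀ ℕ) :
    MvPolynomial.coeff D (chebMv β) = ∏ i, (Chebyshev.T ℝ (β i)).coeff (D i) := by
  unfold chebMv
  simp_rw [aeval_X_eq_sum]
  rw [Finset.prod_univ_sum]
  simp_rw [prod_monomial, MvPolynomial.coeff_sum, MvPolynomial.coeff_monomial]
  by_cases hD : (⇑D : Fin n → ℕ) ∈ Fintype.piFinset (fun i => (Chebyshev.T ℝ (β i)).support)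
  · rw [Finset.sum_eq_single (⇑D : Fin n → ℕ)]
    · simp [sum_single_eq_finsupp]
    · intro g _ hg
      rw [if_neg]
      rw [sum_single_eq_finsupp]
      exact hg
    · intro h; exact absurd hD h
  · rw [Finset.sum_eq_zero, eq_comm]
    · apply Finset.prod_eq_zero_iff.mpr
      simp only [Fintype.mem_piFinset, not_forall] at hD
      obtain ⟨i, hi⟩ := hD
      exact ⟨i, Finset.mem_univ i, Polynomial.notMem_support_iff.mp hi⟩
    · intro g hg
      rw [if_neg]
      rw [sum_single_eq_finsupp]
      rintro rfl
      exact hD hg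
open Polynomial Finset

variable {n : ℕ}

lemma support_sum_le_totalDegree (p : MvPolynomial (Fin n) ℝ)
    (c : (Fin n → ℕ) →₀ ℝ) (hp : p = ∑ α ∈ c.support, c α • chebMv α) :
    ∀ α ∈ c.support, ∑ i, α i ≤ p.totalDegree := by
  intro α hα
  obtain ⟨β, hβmem, hβmax⟩ := Finset.exists_max_image c.support (fun γ => ∑ i, γ i) ⟨α, hα⟩
  refine le_trans (hβmax α hα) ?_
  -- show ∑ i, β i ≤ p.totalDegree via nonzero coefficient at D = β
  set D : Fin n →₀ ℕ := Finsupp.equivFunOnFinite.symm β with hD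
  have hDcoe : (⇑D : Fin n → ℕ) = β := Finsupp.equivFunOnFinite.apply_symm_apply β
  have hcoeff : MvPolynomial.coeff D p ≠ 0 := by
    rw [hp, MvPolynomial.coeff_sum]
    simp_rw [MvPolynomial.smul_eq_C_mul, MvPolynomial.coeff_C_mul, coeff_chebMv, hDcoe]
    rw [Finset.sum_eq_single β]
    · have : ∀ i, (Chebyshev.T ℝ (β i)).coeff (β i) = 2^(β i - 1) := fun i => (T_deg_coeff (β i)).2
      simp_rw [this]
      apply mul_ne_zero (Finsupp.mem_support_iff.mp hβmem)
      exact Finset.prod_ne_zero_iff.mpr fun i _ => by positivity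
    · intro γ hγ hne
      rcases Classical.em (∃ i, γ i < β i) with ⟨i, hi⟩ | hforall
      · apply mul_eq_zero_of_right
        apply Finset.prod_eq_zero (Finset.mem_univ i)
        exact Polynomial.coeff_eq_zero_of_natDegree_lt (lt_of_le_of_lt (T_deg_coeff (γ i)).1 hi)
      · push_neg at hforall
        exfalso
        apply hne
        funext i
        have hle := hβmax γ hγ
        by_contra hne2
        have : ∑ j, β j < ∑ j, γ j :=
          Finset.sum_lt_sum (fun j _ => hforall j) ⟨i, Finset.mem_univ i, lt_of_le_of_ne (hforall i) (Ne.symm hne2)⟩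
        omega
    · intro h; exact absurd hβmem h
  have hmem : D ∈ p.support := MvPolynomial.mem_support_iff.mpr hcoeff
  have := MvPolynomial.le_totalDegree hmem
  refine le_trans (le_of_eq ?_) this
  rw [Finsupp.sum_fintype]
  · exact Finset.sum_congr rfl fun i _ => by rw [hD]; exact congrFun (Finsupp.equivFunOnFinite.apply_symm_apply β).symm i
  · intro i; rfl

lemma IsSumSq.mul_self_mul {R : Type*} [CommRing R] (x : R) {p : R} (hp : IsSumSq p) :
    IsSumSq (x * x * p) := by
  induction hp with
  | zero => simpa using IsSumSq.zero
  | @sq_add a S hS ih =>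
    have : x * x * (a * a + S) = (x*a) * (x*a) + x * x * S := by ring
    rw [this]
    exact IsSumSq.sq_add _ ih

lemma isSumSq_finset_sum {R : Type*} [CommRing R] {ι : Type*} (s : Finset ι) (f : ι → R)
    (h : ∀ i ∈ s, IsSumSq (f i)) : IsSumSq (∑ i ∈ s, f i) := by
  induction s using Finset.cons_induction with
  | empty => simpa using IsSumSq.zero
  | cons j s hj ih =>
    rw [Finset.sum_cons]
    exact IsSumSq.add (h j (Finset.mem_cons_self j s)) (ih fun i hi => h i (Finset.mem_cons.mpr (Or.inr hi)))

lemma deg_or_add {m : ℕ} {a b : MvPolynomial (Fin n) ℝ}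
    (ha : a = 0 ∨ a.totalDegree + 2 ≤ m) (hb : b = 0 ∨ b.totalDegree + 2 ≤ m) :
    a + b = 0 ∨ (a + b).totalDegree + 2 ≤ m := by
  rcases ha with rfl | ha
  · simpa using hb
  rcases hb with rfl | hb
  · simpa using Or.inr ha
  right
  have := MvPolynomial.totalDegree_add a b
  omega

lemma one_sub_aeval_T_sq (a : Fin n) (k : ℕ) :
    1 - (Polynomial.aeval (MvPolynomial.X a) (Chebyshev.T ℝ k) : MvPolynomial (Fin n) ℝ)^2
      = (1 - (MvPolynomial.X a : MvPolynomial (Fin n) ℝ)^2) * (Polynomial.aeval (MvPolynomial.X a) (Chebyshev.U ℝ ((k:ℤ)-1)) : MvPolynomial (Fin n) ℝ)^2 := by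
  have h := congrArg (⇑(Polynomial.aeval (MvPolynomial.X a) : ℝ[X] →ₐ[ℝ] MvPolynomial (Fin n) ℝ)) (pellT k)
  simp only [map_sub, map_mul, map_pow, map_one, Polynomial.aeval_X] at h
  linear_combination -h

lemma lemA (α : Fin n → ℕ) (s : Finset (Fin n)) :
    ∃ σ : Fin n → MvPolynomial (Fin n) ℝ,
      (∀ i, IsSumSq (σ i)) ∧
      (∀ i, σ i = 0 ∨ (σ i).totalDegree + 2 ≤ 2 * ∑ j ∈ s, α j) ∧
      1 - (∏ i ∈ s, Polynomial.aeval (MvPolynomial.X i) (Chebyshev.T ℝ (α i)))^2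
        = ∑ i, (1 - MvPolynomial.X i^2) * σ i := by
  classical
  induction s using Finset.induction_on with
  | empty => exact ⟨0, fun i => IsSumSq.zero, fun i => Or.inl rfl, by simp⟩
  | insert _ _ ha ih =>
    rename_i a s
    obtain ⟨σ, hσs, hσd, hσe⟩ := ih
    set ta : MvPolynomial (Fin n) ℝ := Polynomial.aeval (MvPolynomial.X a) (Chebyshev.T ℝ (α a)) with hta
    set Ua : MvPolynomial (Fin n) ℝ := Polynomial.aeval (MvPolynomial.X a) (Chebyshev.U ℝ ((α a : ℤ)-1)) with hUa
    refine ⟨fun i => ta^2 * σ i + (if i = a then Ua^2 else 0), ?_, ?_, ?_⟩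
    · intro i
      apply IsSumSq.add
      · rw [sq]; exact IsSumSq.mul_self_mul ta (hσs i)
      · split
        · rw [sq]; simpa using IsSumSq.sq_add Ua IsSumSq.zero
        · exact IsSumSq.zero
    · intro i
      rw [Finset.sum_insert ha]
      apply deg_or_add
      · rcases hσd i with h0 | hd
        · exact Or.inl (by rw [h0, mul_zero])
        · right
          have h1 : (ta^2 * σ i).totalDegree ≤ ta.totalDegree * 2 + (σ i).totalDegree := by
            refine le_trans (MvPolynomial.totalDegree_mul _ _) ?_
            have := MvPolynomial.totalDegree_pow ta 2
            omega
          have h2 : ta.totalDegree ≤ α a :=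
            le_trans (totalDegree_aeval_X_le a _) (T_deg_coeff (α a)).1
          omega
      · split
        · rcases Nat.eq_zero_or_pos (α a) with h0 | h0
          · left
            have : Ua = 0 := by
              rw [hUa, h0]; norm_num [Chebyshev.U_neg_one]
            rw [this]; ring
          · right
            have h2 : Ua.totalDegree ≤ α a - 1 := by
              rw [hUa, show ((α a : ℤ) - 1) = ((α a - 1 : ℕ) : ℤ) by omega]
              exact le_trans (totalDegree_aeval_X_le a _) (U_deg (α a - 1))
            have := MvPolynomial.totalDegree_pow Ua 2
            omega
        · exact Or.inl rfl
    · rw [Finset.prod_insert ha]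
      have key : 1 - ta^2 = (1 - (MvPolynomial.X a)^2) * Ua^2 := one_sub_aeval_T_sq a (α a)
      have expand : ∀ i, (1 - MvPolynomial.X i^2) * (ta^2 * σ i + (if i = a then Ua^2 else 0))
          = ta^2 * ((1 - MvPolynomial.X i^2) * σ i) + (if i = a then (1 - MvPolynomial.X a^2) * Ua^2 else 0) := by
        intro i
        split
        · rename_i h; subst h; ring
        · ring
      simp_rw [expand]
      rw [Finset.sum_add_distrib, ← Finset.mul_sum, ← hσe, Finset.sum_ite_eq' Finset.univ a, if_pos (Finset.mem_univ a), ← key]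
      ring

end Aux

/-- For `p ∈ ℝ[x₁,…,xₙ]` with Chebyshev expansion `p = ∑_α c_α T_α`,
the polynomial `‖p‖_{1,cheb} - p` belongs to `Q(1-x₁², …, 1-xₙ²)_{2·deg p}`, where
`‖p‖_{1,cheb} = ∑_α |c_α|`. -/
theorem chebNorm_sub_self_mem_quadraticModule (n : ℕ) (p : MvPolynomial (Fin n) ℝ)
    (c : (Fin n → ℕ) →₀ ℝ) (hp : p = ∑ α ∈ c.support, c α • chebMv α) :
    memCubeQM n (2 * p.totalDegree)
      (MvPolynomial.C (∑ α ∈ c.support, |c α|) - p) := by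
  classical
  have hcert : ∀ α : Fin n → ℕ, ∃ σ : Fin n → MvPolynomial (Fin n) ℝ,
      (∀ i, IsSumSq (σ i)) ∧ (∀ i, σ i = 0 ∨ (σ i).totalDegree + 2 ≤ 2 * ∑ j, α j) ∧
      1 - (chebMv α)^2 = ∑ i, (1 - MvPolynomial.X i^2) * σ i := fun α => lemA α Finset.univ
  choose τ hτs hτd hτe using hcert
  set g : (Fin n → ℕ) → MvPolynomial (Fin n) ℝ :=
    fun α => MvPolynomial.C (Real.sqrt (1/(2*|c α|))) * (MvPolynomial.C |c α| - MvPolynomial.C (c α) * chebMv α) with hg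
  refine ⟨∑ α ∈ c.support, g α * g α,
      fun i => ∑ α ∈ c.support, MvPolynomial.C (|c α|/2) * τ α i, ?_, ?_, ?_, ?_, ?_⟩
  · exact IsSumSq.sum_mul_self c.support g
  · intro i
    refine isSumSq_finset_sum _ _ fun α hα => ?_
    have hC : (MvPolynomial.C (|c α|/2) : MvPolynomial (Fin n) ℝ)
        = MvPolynomial.C (Real.sqrt (|c α|/2)) * MvPolynomial.C (Real.sqrt (|c α|/2)) := by
      rw [← MvPolynomial.C_mul, Real.mul_self_sqrt (by positivity)]
    rw [hC]
    exact IsSumSq.mul_self_mul _ (hτs α i)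
  · refine MvPolynomial.totalDegree_finsetSum_le fun α hα => ?_
    have hα' : ∑ i, α i ≤ p.totalDegree := support_sum_le_totalDegree p c hp α hα
    have hcm : (chebMv α).totalDegree ≤ p.totalDegree := by
      refine le_trans ?_ hα'
      refine le_trans (MvPolynomial.totalDegree_finset_prod _ _)
        (Finset.sum_le_sum fun i _ => le_trans (totalDegree_aeval_X_le i _) (T_deg_coeff (α i)).1)
    have hgdeg : (g α).totalDegree ≤ p.totalDegree := by
      rw [hg]
      refine le_trans (MvPolynomial.totalDegree_mul _ _) ?_
      rw [MvPolynomial.totalDegree_C, zero_add]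
      refine le_trans (MvPolynomial.totalDegree_sub _ _) (max_le (by simp) ?_)
      exact le_trans (MvPolynomial.totalDegree_mul _ _) (by simpa using hcm)
    have := MvPolynomial.totalDegree_mul (g α) (g α)
    omega
  · intro i
    refine MvPolynomial.totalDegree_finsetSum_le fun α hα => ?_
    refine le_trans (MvPolynomial.totalDegree_mul _ _) ?_
    rw [MvPolynomial.totalDegree_C, zero_add]
    rcases hτd α i with h0 | hd
    · rw [h0]; simp
    · have := support_sum_le_totalDegree p c hp α hα; omega
  · -- the identity
    have hswap : ∑ i, (1 - MvPolynomial.X i ^ 2) * (∑ α ∈ c.support, MvPolynomial.C (|c α|/2) * τ α i)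
        = ∑ α ∈ c.support, MvPolynomial.C (|c α|/2) * (1 - (chebMv α)^2) := by
      simp_rw [Finset.mul_sum]
      rw [Finset.sum_comm]
      refine Finset.sum_congr rfl fun α _ => ?_
      rw [hτe α, Finset.mul_sum]
      exact Finset.sum_congr rfl fun i _ => by ring
    rw [hswap, hp, ← Finset.sum_add_distrib, map_sum, ← Finset.sum_sub_distrib]
    refine Finset.sum_congr rfl fun α hα => ?_
    have hc : c α ≠ 0 := Finsupp.mem_support_iff.mp hα
    rw [MvPolynomial.smul_eq_C_mul, hg]
    apply mul_left_cancel₀ (a := (MvPolynomial.C (2*|c α|) : MvPolynomial (Fin n) ℝ))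
      (MvPolynomial.C_ne_zero.mpr (mul_pos two_pos (abs_pos.mpr hc)).ne')
    have h2 : (MvPolynomial.C (2*|c α|) : MvPolynomial (Fin n) ℝ) = 2 * MvPolynomial.C |c α| := by
      rw [MvPolynomial.C_mul, map_ofNat]
    have hee : (MvPolynomial.C (2*|c α|) : MvPolynomial (Fin n) ℝ) *
        (MvPolynomial.C (Real.sqrt (1/(2*|c α|))) * MvPolynomial.C (Real.sqrt (1/(2*|c α|)))) = 1 := by
      rw [← MvPolynomial.C_mul, ← MvPolynomial.C_mul, ← MvPolynomial.C_1]
      congr 1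
      rw [Real.mul_self_sqrt (by positivity)]
      have : |c α| ≠ 0 := abs_ne_zero.mpr hc
      field_simp
    have hcc : (MvPolynomial.C (c α) : MvPolynomial (Fin n) ℝ) * MvPolynomial.C (c α)
        = MvPolynomial.C |c α| * MvPolynomial.C |c α| := by
      rw [← MvPolynomial.C_mul, ← MvPolynomial.C_mul, abs_mul_abs_self]
    have hdd : (MvPolynomial.C (2*|c α|) : MvPolynomial (Fin n) ℝ) * MvPolynomial.C (|c α|/2)
        = MvPolynomial.C (c α) * MvPolynomial.C (c α) := by
      rw [← MvPolynomial.C_mul, ← MvPolynomial.C_mul, ← abs_mul_abs_self (c α)]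
      ring_nf
    linear_combination (-((MvPolynomial.C |c α| - MvPolynomial.C (c α) * chebMv α)^2)) * hee
      + (-(1 - (chebMv α)^2)) * hdd
      + (MvPolynomial.C |c α| - MvPolynomial.C (c α) * chebMv α) * h2
      + (-1 : MvPolynomial (Fin n) ℝ) * hcc
end

section
/- Let f ∈ ℝ[x_1,…,x_n] and let r ≥ deg(f). Set f_min := min_{x ∈ [−1,1]ⁿ} f(x) and f_{(2r)} := sup { t ∈ ℝ : f − t ∈ Q(1−x_1², …, 1−x_n²)_{2r} }. Then for every polynomial q ∈ Q(1−x_1², …, 1−x_n²)_{2r} one has f_min − f_{(2r)} ≤ ‖f − f_min − q‖_{1,cheb}. -/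
open Polynomial Finset

namespace ChebAux

variable (R : Type*) [CommRing R]

open Polynomial.Chebyshev

/-- Addition formula: `T (m+k) = T m * T k - (1 - X^2) * (U (m-1) * U (k-1))`. -/
theorem T_add_eq (m k : ℤ) :
    T R (m + k) = T R m * T R k - (1 - X ^ 2) * (U R (m - 1) * U R (k - 1)) := by
  induction k using Polynomial.Chebyshev.induct with
  | zero => simp [T_zero]
  | one =>
      have h := T_eq_X_mul_T_sub_pol_U R (m - 1)
      have h2 : m - 1 + 2 = m + 1 := by ring
      have h3 : m - 1 + 1 = m := by ring
      rw [h2, h3] at h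
      simpa [T_one, U_zero, mul_comm] using h
  | add_two k ih1 ih2 =>
      have h₁ := T_add_two R (m + k)
      have h₂ := T_add_two R k
      have h₃ := U_add_two R ((k : ℤ) - 1)
      simp only [show ((k:ℤ)-1)+2 = (k:ℤ)+1 from by ring,
        show ((k:ℤ)-1)+1 = (k:ℤ) from by ring] at h₃
      simp only [show (k:ℤ)+1-1 = (k:ℤ) from by ring] at ih1
      simp only [show m+((k:ℤ)+2) = m+(k:ℤ)+2 from by ring,
        show (k:ℤ)+2-1 = (k:ℤ)+1 from by ring]
      linear_combination (norm := ring_nf) h₁ - T R m * h₂ +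
        (1 - X ^ 2) * U R (m - 1) * h₃ + 2 * (X : R[X]) * ih1 - ih2
  | neg_add_one k ih1 ih2 =>
      have h₁ := T_sub_two R (m - (k : ℤ) + 1)
      have h₂ := T_sub_two R (-(k : ℤ) + 1)
      have h₃ := U_sub_two R (-(k : ℤ))
      simp only [show m-(k:ℤ)+1-2 = m+(-(k:ℤ)-1) from by ring,
        show m-(k:ℤ)+1-1 = m+(-(k:ℤ)) from by ring,
        show m-(k:ℤ)+1 = m+(-(k:ℤ)+1) from by ring] at h₁
      simp only [show -(k:ℤ)+1-2 = -(k:ℤ)-1 from by ring,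
        show -(k:ℤ)+1-1 = -(k:ℤ) from by ring] at h₂
      simp only [show -(k:ℤ)-2 = -(k:ℤ)-1-1 from by ring] at h₃
      simp only [show -(k:ℤ)+1-1 = -(k:ℤ) from by ring] at ih2
      linear_combination (norm := ring_nf) h₁ - T R m * h₂ +
        (1 - X ^ 2) * U R (m - 1) * h₃ + 2 * (X : R[X]) * ih1 - ih2

/-- Pell identity for Chebyshev polynomials. -/
theorem pell (m : ℤ) : T R m ^ 2 + (1 - X ^ 2) * U R (m - 1) ^ 2 = 1 := by
  have h := T_add_eq R m (-m)
  have h1 : m + -m = 0 := by ring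
  rw [h1, T_zero, T_neg, U_neg_sub_one] at h
  linear_combination -h



theorem natDegree_T_le : ∀ k : ℕ, (T R (k : ℤ)).natDegree ≤ k := by
  intro k
  induction k using Nat.twoStepInduction with
  | zero => simp [T_zero]
  | one => simpa [T_one] using natDegree_X_le
  | more k ih1 ih2 =>
      have h : ((k : ℤ) + 2) = ((k + 2 : ℕ) : ℤ) := by push_cast; ring
      rw [← h, T_add_two]
      refine le_trans (natDegree_sub_le _ _) ?_
      simp only [max_le_iff]
      constructor
      · refine le_trans (natDegree_mul_le) ?_
        have : (2 * X : R[X]).natDegree ≤ 1 := by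
          refine le_trans (natDegree_mul_le) ?_
          simpa using natDegree_X_le
        have h2 : ((k : ℤ) + 1) = ((k + 1 : ℕ) : ℤ) := by push_cast; ring
        rw [h2]
        omega
      · omega

theorem natDegree_U_le : ∀ k : ℕ, (U R (k : ℤ)).natDegree ≤ k := by
  intro k
  induction k using Nat.twoStepInduction with
  | zero => simp [U_zero]
  | one =>
      rw [show ((1:ℕ):ℤ) = 1 from rfl, U_one]
      refine le_trans (natDegree_mul_le) ?_
      simpa using natDegree_X_le
  | more k ih1 ih2 =>
      have h : ((k : ℤ) + 2) = ((k + 2 : ℕ) : ℤ) := by push_cast; ring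
      rw [← h, U_add_two]
      refine le_trans (natDegree_sub_le _ _) ?_
      simp only [max_le_iff]
      constructor
      · refine le_trans (natDegree_mul_le) ?_
        have : (2 * X : R[X]).natDegree ≤ 1 := by
          refine le_trans (natDegree_mul_le) ?_
          simpa using natDegree_X_le
        have h2 : ((k : ℤ) + 1) = ((k + 1 : ℕ) : ℤ) := by push_cast; ring
        rw [h2]
        omega
      · omega

theorem coeff_T_self : ∀ k : ℕ, (T ℝ (k : ℤ)).coeff k = 2 ^ (k - 1) := by
  intro k
  induction k using Nat.twoStepInduction with
  | zero => simp [T_zero]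
  | one => simp [T_one]
  | more k ih1 ih2 =>
      have h : ((k : ℤ) + 2) = ((k + 2 : ℕ) : ℤ) := by push_cast; ring
      rw [← h, T_add_two]
      have h2 : ((k : ℤ) + 1) = ((k + 1 : ℕ) : ℤ) := by push_cast; ring
      have e : (2 * X * T ℝ ((k:ℤ) + 1)) = Polynomial.C 2 * (X * T ℝ ((k:ℤ)+1)) := by
        rw [show ((2:ℝ[X])) = Polynomial.C (2:ℝ) from (map_ofNat Polynomial.C 2).symm]; ring
      rw [coeff_sub, e, coeff_C_mul, coeff_X_mul, h2, ih2,
        coeff_eq_zero_of_natDegree_lt (lt_of_le_of_lt (natDegree_T_le ℝ k) (by omega))]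
      simp [pow_succ]
      ring

theorem coeff_T_self_pos (k : ℕ) : 0 < (T ℝ (k : ℤ)).coeff k := by
  rw [coeff_T_self]; positivity


end ChebAux

namespace MvAux

open MvPolynomial ChebAux Polynomial.Chebyshev

variable {n : ℕ}

noncomputable def tX (n : ℕ) (k : ℤ) (i : Fin n) : MvPolynomial (Fin n) ℝ :=
  Polynomial.aeval (MvPolynomial.X i) (T ℝ k)

noncomputable def uX (n : ℕ) (k : ℤ) (i : Fin n) : MvPolynomial (Fin n) ℝ :=
  Polynomial.aeval (MvPolynomial.X i) (U ℝ k)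

theorem tX_pell (i : Fin n) (b : ℤ) :
    tX n b i ^ 2 + (1 - MvPolynomial.X i ^ 2) * uX n (b - 1) i ^ 2 = 1 := by
  have h := pell ℝ b
  apply_fun (Polynomial.aeval (MvPolynomial.X i) :
    Polynomial ℝ →ₐ[ℝ] MvPolynomial (Fin n) ℝ) at h
  simp only [map_add, map_mul, map_sub, map_pow, map_one, Polynomial.aeval_X] at h
  simp only [tX, uX]
  linear_combination h

theorem tX_add (i : Fin n) (b c : ℤ) :
    tX n b i * tX n c i - (1 - MvPolynomial.X i ^ 2) * (uX n (b - 1) i * uX n (c - 1) i)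
      = tX n (b + c) i := by
  have h := T_add_eq ℝ b c
  apply_fun (Polynomial.aeval (MvPolynomial.X i) :
    Polynomial ℝ →ₐ[ℝ] MvPolynomial (Fin n) ℝ) at h
  simp only [map_add, map_mul, map_sub, map_pow, map_one, Polynomial.aeval_X] at h
  simp only [tX, uX]
  linear_combination -h

theorem totalDegree_aeval_le (p : Polynomial ℝ) (i : Fin n) :
    (Polynomial.aeval (MvPolynomial.X i) p : MvPolynomial (Fin n) ℝ).totalDegree ≤
      p.natDegree := by
  rw [Polynomial.aeval_eq_sum_range]
  refine le_trans (totalDegree_finset_sum _ _) ?_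
  refine Finset.sup_le fun j hj => ?_
  refine le_trans (totalDegree_smul_le _ _) ?_
  refine le_trans (totalDegree_pow _ _) ?_
  rw [totalDegree_X]
  simp only [Finset.mem_range] at hj
  omega

theorem tX_deg (k : ℕ) (i : Fin n) : (tX n (k : ℤ) i).totalDegree ≤ k :=
  le_trans (totalDegree_aeval_le _ _) (natDegree_T_le ℝ k)

theorem uX_deg (b : ℕ) (i : Fin n) : (uX n ((b : ℤ) - 1) i).totalDegree ≤ b - 1 := by
  cases b with
  | zero => simp [uX, U_neg_one]
  | succ s =>
      have : ((s+1 : ℕ) : ℤ) - 1 = (s : ℤ) := by push_cast; ring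
      rw [this]
      exact le_trans (totalDegree_aeval_le _ _) (natDegree_U_le ℝ s)

theorem isSumSq_sq (p : MvPolynomial (Fin n) ℝ) : IsSumSq (p ^ 2) := by
  have h := IsSumSq.sq_add p IsSumSq.zero
  simpa [sq] using h

theorem sumSq_mul_sq {s : MvPolynomial (Fin n) ℝ} (hs : IsSumSq s)
    (p : MvPolynomial (Fin n) ℝ) : IsSumSq (p ^ 2 * s) := by
  induction hs with
  | zero => simpa using IsSumSq.zero
  | @sq_add a S hS ih =>
      have : p ^ 2 * (a * a + S) = (p * a) * (p * a) + p ^ 2 * S := by ring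
      rw [this]
      exact IsSumSq.sq_add _ ih

theorem eval_sumSq_nonneg {p : MvPolynomial (Fin n) ℝ} (hp : IsSumSq p)
    (x : Fin n → ℝ) : 0 ≤ MvPolynomial.eval x p := by
  induction hp with
  | zero => simp
  | @sq_add a S hS ih => simp only [map_add, map_mul]; nlinarith [mul_self_nonneg (MvPolynomial.eval x a)]

/-- convenient degree predicate -/
def DegOk (d : ℕ) (p : MvPolynomial (Fin n) ℝ) : Prop :=
  p = 0 ∨ p.totalDegree + 2 ≤ 2 * d

theorem DegOk.zero (d : ℕ) : DegOk d (0 : MvPolynomial (Fin n) ℝ) := Or.inl rfl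

theorem DegOk.add {d : ℕ} {p q : MvPolynomial (Fin n) ℝ} (hp : DegOk d p) (hq : DegOk d q) :
    DegOk d (p + q) := by
  rcases hp with hp | hp
  · simpa [hp] using hq
  rcases hq with hq | hq
  · simpa [hq] using (show DegOk d p from Or.inr hp)
  · right
    have := totalDegree_add p q
    omega

theorem DegOk.mono {d d' : ℕ} (h : d ≤ d') {p : MvPolynomial (Fin n) ℝ} (hp : DegOk d p) :
    DegOk d' p := by
  rcases hp with hp | hp
  · exact Or.inl hp
  · right; omega

theorem DegOk.of_le {d : ℕ} {p : MvPolynomial (Fin n) ℝ} (h : p.totalDegree + 2 ≤ 2 * d) :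
    DegOk d p := Or.inr h

end MvAux

namespace MvAux2
open MvPolynomial ChebAux MvAux Polynomial.Chebyshev

variable {n : ℕ}

theorem memQ_add {m : ℕ} {p q : MvPolynomial (Fin n) ℝ} (hp : memCubeQM n m p)
    (hq : memCubeQM n m q) : memCubeQM n m (p + q) := by
  obtain ⟨a, σ, ha, hσ, had, hσd, hrep⟩ := hp
  obtain ⟨b, τ, hb, hτ, hbd, hτd, hrep'⟩ := hq
  refine ⟨a + b, fun i => σ i + τ i, ha.add hb, fun i => (hσ i).add (hτ i), ?_, fun i => ?_, ?_⟩
  · exact le_trans (totalDegree_add a b) (by omega)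
  · exact le_trans (totalDegree_add _ _) (by have := hσd i; have := hτd i; omega)
  · rw [hrep, hrep']
    simp only [mul_add, Finset.sum_add_distrib]
    ring

theorem memQ_sumSq {m : ℕ} {p : MvPolynomial (Fin n) ℝ} (hp : IsSumSq p)
    (hd : p.totalDegree ≤ m) : memCubeQM n m p :=
  ⟨p, 0, hp, fun _ => IsSumSq.zero, hd, fun _ => by simp, by simp⟩

theorem memQ_gmul {m : ℕ} {σ : MvPolynomial (Fin n) ℝ} (i : Fin n) (hσ : IsSumSq σ)
    (hd : σ.totalDegree ≤ m - 2) :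
    memCubeQM n m ((1 - MvPolynomial.X i ^ 2) * σ) := by
  refine ⟨0, fun j => if j = i then σ else 0, IsSumSq.zero, fun j => ?_, by simp, fun j => ?_, ?_⟩
  · dsimp only; split <;> simp [hσ, IsSumSq.zero]
  · dsimp only; split <;> simp [hd]
  · simp [mul_ite, Finset.sum_ite_eq', mul_zero]

theorem memQ_from_rep {m d : ℕ} {p : MvPolynomial (Fin n) ℝ}
    (τ : Fin n → MvPolynomial (Fin n) ℝ) (hτ : ∀ j, IsSumSq (τ j))
    (hτd : ∀ j, DegOk d (τ j)) (hdm : 2 * d ≤ m)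
    (hrep : p = ∑ j, (1 - MvPolynomial.X j ^ 2) * τ j) : memCubeQM n m p := by
  refine ⟨0, τ, IsSumSq.zero, hτ, by simp, fun j => ?_, by simpa using hrep⟩
  rcases hτd j with h | h
  · simp [h]
  · omega

theorem memQ_smul {m : ℕ} {p : MvPolynomial (Fin n) ℝ} {a : ℝ} (ha : 0 ≤ a)
    (hp : memCubeQM n m p) : memCubeQM n m (a • p) := by
  obtain ⟨σ₀, σ, h0, hσ, h0d, hσd, hrep⟩ := hp
  have hCa : (MvPolynomial.C (Real.sqrt a) : MvPolynomial (Fin n) ℝ) ^ 2 = MvPolynomial.C a := by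
    rw [← map_pow, Real.sq_sqrt ha]
  refine ⟨MvPolynomial.C a * σ₀, fun i => MvPolynomial.C a * σ i, ?_, fun i => ?_, ?_, fun i => ?_, ?_⟩
  · rw [← hCa]; exact sumSq_mul_sq h0 _
  · rw [← hCa]; exact sumSq_mul_sq (hσ i) _
  · exact le_trans (totalDegree_mul _ _) (by simpa [totalDegree_C] using h0d)
  · exact le_trans (totalDegree_mul _ _) (by simpa [totalDegree_C] using hσd i)
  · rw [MvPolynomial.smul_eq_C_mul, hrep, mul_add, Finset.mul_sum]
    congr 1
    exact Finset.sum_congr rfl fun j _ => by ring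

theorem memQ_const {m : ℕ} {a : ℝ} (ha : 0 ≤ a) : memCubeQM n m (MvPolynomial.C a) := by
  have hCa : (MvPolynomial.C (Real.sqrt a) : MvPolynomial (Fin n) ℝ) ^ 2 = MvPolynomial.C a := by
    rw [← map_pow, Real.sq_sqrt ha]
  refine memQ_sumSq ?_ (by simp [totalDegree_C])
  rw [← hCa]; exact isSumSq_sq _

theorem memQ_sum {m : ℕ} {ι : Type*} (s : Finset ι) (f : ι → MvPolynomial (Fin n) ℝ)
    (h : ∀ i ∈ s, memCubeQM n m (f i)) : memCubeQM n m (∑ i ∈ s, f i) := by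
  classical
  induction s using Finset.induction with
  | empty => simpa using memQ_const le_rfl
  | @insert a s ha ih =>
      rw [Finset.sum_insert ha]
      exact memQ_add (h a (Finset.mem_insert_self a s))
        (ih fun i hi => h i (Finset.mem_insert_of_mem hi))

end MvAux2

namespace MvAux3
open MvPolynomial ChebAux MvAux MvAux2 Polynomial.Chebyshev

variable {n : ℕ}

theorem uX_neg_one (i : Fin n) : uX n (-1) i = 0 := by
  simp [uX, U_neg_one]

/-- telescoping: `1 - P²` is a clean sum for a product of Chebyshev factors. -/
theorem clean (s : Finset (Fin n)) (α : Fin n → ℕ) :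
    ∃ τ : Fin n → MvPolynomial (Fin n) ℝ,
      (∀ j, IsSumSq (τ j)) ∧ (∀ j, DegOk (∑ l ∈ s, α l) (τ j)) ∧
      1 - (∏ l ∈ s, tX n (α l) l) ^ 2 = ∑ j, (1 - MvPolynomial.X j ^ 2) * τ j := by
  classical
  induction s using Finset.induction with
  | empty => exact ⟨0, fun j => IsSumSq.zero, fun j => DegOk.zero _, by simp⟩
  | @insert a s ha ih =>
      obtain ⟨τ, hSOS, hdeg, hrep⟩ := ih
      set P : MvPolynomial (Fin n) ℝ := ∏ l ∈ s, tX n (α l) l with hP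
      set t : MvPolynomial (Fin n) ℝ := tX n (α a) a with ht
      refine ⟨fun j => (if j = a then uX n ((α a : ℤ) - 1) a ^ 2 else 0) + t ^ 2 * τ j,
        fun j => ?_, fun j => ?_, ?_⟩
      · refine IsSumSq.add ?_ (sumSq_mul_sq (hSOS j) _)
        split
        · exact isSumSq_sq _
        · exact IsSumSq.zero
      · rw [Finset.sum_insert ha]
        refine DegOk.add ?_ ?_
        · split
          · rcases Nat.eq_zero_or_pos (α a) with h0 | h0
            · left
              simp [h0, show ((0:ℕ):ℤ) - 1 = -1 from by norm_num, uX_neg_one]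
            · refine DegOk.of_le ?_
              have hu := uX_deg (n := n) (α a) a
              have := totalDegree_pow (uX n ((α a : ℤ) - 1) a) 2
              omega
          · exact DegOk.zero _
        · rcases hdeg j with h | h
          · left; simp [h]
          · refine DegOk.of_le ?_
            have h1 := totalDegree_mul (t ^ 2) (τ j)
            have h2 := totalDegree_pow t 2
            have h3 := tX_deg (n := n) (α a) a
            rw [← ht] at h3
            omega
      · rw [Finset.prod_insert ha, ← hP]
        simp only [mul_add, Finset.sum_add_distrib]
        have e1 : ∑ j, (1 - MvPolynomial.X j ^ 2) *
            (if j = a then uX n ((α a : ℤ) - 1) a ^ 2 else 0) =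
            (1 - MvPolynomial.X a ^ 2) * uX n ((α a : ℤ) - 1) a ^ 2 := by
          simp [mul_ite, Finset.sum_ite_eq', mul_zero]
        have e2 : ∑ j, (1 - MvPolynomial.X j ^ 2) * (t ^ 2 * τ j) =
            t ^ 2 * ∑ j, (1 - MvPolynomial.X j ^ 2) * τ j := by
          rw [Finset.mul_sum]
          exact Finset.sum_congr rfl fun j _ => by ring
        rw [e1, e2, ← hrep]
        have hpell := tX_pell (n := n) a (α a)
        rw [← ht] at hpell
        linear_combination -hpell
end MvAux3

namespace MvAux4
open MvPolynomial ChebAux MvAux MvAux2 MvAux3 Polynomial.Chebyshev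

theorem M_ring {A : Type*} [CommRing A] (T1 T2 U1 U2 g P Q T12 E H : A)
    (h1 : T1 ^ 2 + g * U1 ^ 2 = 1) (h2 : T2 ^ 2 + g * U2 ^ 2 = 1)
    (h3 : T1 * T2 - g * (U1 * U2) = T12) (h4 : E ^ 2 = 1) (h5 : H ^ 2 * 2 = 1) :
    1 - E * (T12 * (P * Q)) = (H * (T1 * P - E * (T2 * Q))) ^ 2
      + g * (H * (U1 * P + E * (U2 * Q))) ^ 2 + H ^ 2 * (1 - P ^ 2) + H ^ 2 * (1 - Q ^ 2) := by
  linear_combination (-(H^2*P^2)) * h1 + (-(H^2*E^2*Q^2)) * h2 + (2*H^2*E*P*Q) * h3 +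
    (-(H^2*Q^2)) * h4 + (E*(T12*P*Q) - 1) * h5

variable {n : ℕ}

theorem memQ_M (r : ℕ) (i : Fin n) (b c dP dQ : ℕ) (P Q : MvPolynomial (Fin n) ℝ)
    (ε : ℝ) (hε : ε = 1 ∨ ε = -1)
    (hPd : P.totalDegree ≤ dP) (hQd : Q.totalDegree ≤ dQ)
    (τP τQ : Fin n → MvPolynomial (Fin n) ℝ)
    (hτPs : ∀ j, IsSumSq (τP j)) (hτPd : ∀ j, DegOk dP (τP j))
    (hPrep : 1 - P ^ 2 = ∑ j, (1 - MvPolynomial.X j ^ 2) * τP j)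
    (hτQs : ∀ j, IsSumSq (τQ j)) (hτQd : ∀ j, DegOk dQ (τQ j))
    (hQrep : 1 - Q ^ 2 = ∑ j, (1 - MvPolynomial.X j ^ 2) * τQ j)
    (hb : b + dP ≤ r) (hc : c + dQ ≤ r) :
    memCubeQM n (2 * r) (1 - ε • (tX n ((b : ℤ) + (c : ℤ)) i * (P * Q))) := by
  set H : MvPolynomial (Fin n) ℝ := MvPolynomial.C (Real.sqrt (1/2)) with hH
  set E : MvPolynomial (Fin n) ℝ := MvPolynomial.C ε with hE
  have hH2 : H ^ 2 = MvPolynomial.C (1/2 : ℝ) := by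
    rw [hH, ← map_pow, Real.sq_sqrt (by norm_num : (0:ℝ) ≤ 1/2)]
  have hH5 : H ^ 2 * 2 = 1 := by
    rw [hH2, show ((2 : MvPolynomial (Fin n) ℝ)) = MvPolynomial.C (2:ℝ) from
      (map_ofNat _ 2).symm, ← map_mul]
    norm_num
  have hE4 : E ^ 2 = 1 := by
    rcases hε with h | h <;> rw [hE, h] <;> simp
  have hkey := M_ring (tX n (b : ℤ) i) (tX n (c : ℤ) i) (uX n ((b:ℤ) - 1) i)
    (uX n ((c:ℤ) - 1) i) (1 - MvPolynomial.X i ^ 2) P Q (tX n ((b:ℤ) + (c:ℤ)) i) E H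
    (tX_pell i b) (tX_pell i c) (tX_add i b c) hE4 hH5
  rw [MvPolynomial.smul_eq_C_mul, ← hE, hkey]
  -- degree helpers
  have hT1P : (tX n (b:ℤ) i * P).totalDegree ≤ r :=
    le_trans (totalDegree_mul _ _) (by have := tX_deg (n := n) b i; omega)
  have hT2Q : (E * (tX n (c:ℤ) i * Q)).totalDegree ≤ r := by
    refine le_trans (totalDegree_mul _ _) ?_
    have h2 : (tX n (c:ℤ) i * Q).totalDegree ≤ r :=
      le_trans (totalDegree_mul _ _) (by have := tX_deg (n := n) c i; omega)
    simpa [hE, totalDegree_C] using h2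
  have hU1P : (uX n ((b:ℤ) - 1) i * P).totalDegree ≤ r - 1 := by
    cases b with
    | zero => simp [show ((0:ℕ):ℤ) - 1 = -1 from by norm_num, uX_neg_one]
    | succ s =>
        refine le_trans (totalDegree_mul _ _) ?_
        have := uX_deg (n := n) (s+1) i
        omega
  have hU2Q : (E * (uX n ((c:ℤ) - 1) i * Q)).totalDegree ≤ r - 1 := by
    refine le_trans (totalDegree_mul _ _) ?_
    have h2 : (uX n ((c:ℤ) - 1) i * Q).totalDegree ≤ r - 1 := by
      cases c with
      | zero => simp [show ((0:ℕ):ℤ) - 1 = -1 from by norm_num, uX_neg_one]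
      | succ s =>
          refine le_trans (totalDegree_mul _ _) ?_
          have := uX_deg (n := n) (s+1) i
          omega
    simpa [hE, totalDegree_C] using h2
  refine memQ_add (memQ_add (memQ_add ?_ ?_) ?_) ?_
  · -- σ₀ square
    refine memQ_sumSq (isSumSq_sq _) ?_
    refine le_trans (totalDegree_pow _ _) ?_
    have hin : (H * (tX n (b:ℤ) i * P - E * (tX n (c:ℤ) i * Q))).totalDegree ≤ r := by
      refine le_trans (totalDegree_mul _ _) ?_
      have := totalDegree_sub (tX n (b:ℤ) i * P) (E * (tX n (c:ℤ) i * Q))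
      simp only [hH, totalDegree_C]
      omega
    omega
  · -- g-term
    refine memQ_gmul i (isSumSq_sq _) ?_
    refine le_trans (totalDegree_pow _ _) ?_
    have hin : (H * (uX n ((b:ℤ)-1) i * P + E * (uX n ((c:ℤ)-1) i * Q))).totalDegree ≤ r - 1 := by
      refine le_trans (totalDegree_mul _ _) ?_
      have := totalDegree_add (uX n ((b:ℤ)-1) i * P) (E * (uX n ((c:ℤ)-1) i * Q))
      simp only [hH, totalDegree_C]
      omega
    omega
  · -- H²(1-P²)
    rw [hH2, ← MvPolynomial.smul_eq_C_mul]
    refine memQ_smul (by norm_num) ?_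
    exact memQ_from_rep τP hτPs hτPd (by omega) hPrep
  · rw [hH2, ← MvPolynomial.smul_eq_C_mul]
    refine memQ_smul (by norm_num) ?_
    exact memQ_from_rep τQ hτQs hτQd (by omega) hQrep

end MvAux4

namespace MvAux5
open MvPolynomial ChebAux MvAux MvAux2 MvAux3 MvAux4 Polynomial.Chebyshev

variable {n : ℕ}

theorem prod_tX_deg (α : Fin n → ℕ) (s : Finset (Fin n)) :
    (∏ j ∈ s, tX n (α j) j).totalDegree ≤ ∑ j ∈ s, α j :=
  le_trans (totalDegree_finset_prod s _) (Finset.sum_le_sum fun j _ => tX_deg (α j) j)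

theorem key (r : ℕ) (α : Fin n → ℕ) (hα : ∑ i, α i ≤ 2 * r) (ε : ℝ)
    (hε : ε = 1 ∨ ε = -1) :
    memCubeQM n (2 * r) (1 - ε • ∏ i, tX n (α i) i) := by
  classical
  rcases Nat.eq_zero_or_pos (∑ i, α i) with hD0 | hDpos
  · have hz : ∀ i, α i = 0 := by
      intro i
      exact Finset.sum_eq_zero_iff.mp hD0 i (Finset.mem_univ i)
    have hone : (∏ i, tX n (α i) i) = 1 := by
      refine Finset.prod_eq_one fun i _ => ?_
      simp [hz i, tX, T_zero]
    rw [hone]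
    rcases hε with h | h <;> subst h
    · simpa using memQ_const (n := n) (m := 2*r) le_rfl
    · have h2 : (MvPolynomial.C (2:ℝ) : MvPolynomial (Fin n) ℝ) = 2 := map_ofNat _ 2
      have : (1 : MvPolynomial (Fin n) ℝ) - (-1 : ℝ) • 1 = MvPolynomial.C (2:ℝ) := by
        rw [h2, MvPolynomial.smul_eq_C_mul, map_neg, map_one]
        ring
      rw [this]
      exact memQ_const (by norm_num)
  -- main case
  set D := ∑ i, α i with hD
  obtain ⟨i0, -, -⟩ := Finset.exists_ne_zero_of_sum_ne_zero (by omega :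
    ∑ i, α i ≠ 0)
  have hn : 0 < n := i0.pos
  have hr : 1 ≤ r := by omega
  set m := D - r with hm
  set PS : ℕ → ℕ := fun k => ∑ j ∈ Finset.univ.filter (fun j : Fin n => (j : ℕ) < k), α j
    with hPS
  have hPSn : PS n = D := by
    have hfil : Finset.univ.filter (fun j : Fin n => (j : ℕ) < n) = Finset.univ := by
      ext j
      simp [Fin.is_lt]
    rw [hPS]
    simp only
    rw [hfil]
  have hPSle : ∀ k, PS k ≤ D := by
    intro k
    rw [hD]
    exact Finset.sum_le_sum_of_subset (Finset.filter_subset _ _)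
  have hPS_succ : ∀ k, (hk : k < n) → PS (k+1) = α ⟨k, hk⟩ + PS k := by
    intro k hk
    have hins : Finset.univ.filter (fun j : Fin n => (j : ℕ) < k + 1) =
        insert ⟨k, hk⟩ (Finset.univ.filter (fun j : Fin n => (j : ℕ) < k)) := by
      ext j
      simp only [Finset.mem_filter, Finset.mem_univ, true_and, Finset.mem_insert, Fin.ext_iff]
      omega
    rw [hPS]
    simp only
    rw [hins, Finset.sum_insert (by simp)]
  have hex : ∃ k, m < PS (k + 1) := by
    refine ⟨n - 1, ?_⟩
    rw [show n - 1 + 1 = n from by omega, hPSn]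
    omega
  obtain ⟨K, hK, hKmin⟩ : ∃ K, (m < PS (K+1)) ∧ ∀ k < K, ¬ m < PS (k+1) :=
    ⟨Nat.find hex, Nat.find_spec hex, fun k hk => Nat.find_min hex hk⟩
  have hKn : K < n := by
    by_contra h
    push_neg at h
    have := hKmin (n-1) (by omega)
    rw [show n - 1 + 1 = n from by omega, hPSn] at this
    omega
  have hPSK_le : PS K ≤ m := by
    cases K with
    | zero => simp [hPS]
    | succ k =>
        have := hKmin k (by omega)
        omega
  set istar : Fin n := ⟨K, hKn⟩ with histar
  have hsucc : PS (K + 1) = α istar + PS K := hPS_succ K hKn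
  set b := m - PS K with hb
  set c := PS (K + 1) - m with hc
  have hbc : b + c = α istar := by omega
  set s1 := Finset.univ.filter (fun j : Fin n => (j : ℕ) < K) with hs1
  set s2 := Finset.univ.filter (fun j : Fin n => K < (j : ℕ)) with hs2
  set dP := ∑ l ∈ s1, α l with hdPdef
  set dQ := ∑ l ∈ s2, α l with hdQdef
  have hPSK : dP = PS K := rfl
  have hpart : PS (K + 1) + dQ = D := by
    rw [hD]
    have hsplit : Finset.univ.filter (fun j : Fin n => (j : ℕ) < K + 1) ∪ s2 =
        Finset.univ := by
      ext j
      simp only [Finset.mem_union, Finset.mem_filter, Finset.mem_univ, true_and, hs2]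
      exact iff_of_true (by omega) trivial
    have hdisj : Disjoint (Finset.univ.filter (fun j : Fin n => (j : ℕ) < K + 1)) s2 := by
      rw [Finset.disjoint_left]
      intro j hj1 hj2
      simp only [Finset.mem_filter, Finset.mem_univ, true_and] at hj1
      rw [hs2] at hj2
      simp only [Finset.mem_filter, Finset.mem_univ, true_and] at hj2
      omega
    rw [hPS, hdQdef]
    simp only
    rw [← Finset.sum_union hdisj, hsplit]
  set P := ∏ j ∈ s1, tX n (α j) j with hPdef
  set Q := ∏ j ∈ s2, tX n (α j) j with hQdef
  have hdP : P.totalDegree ≤ dP := prod_tX_deg α s1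
  have hdQ : Q.totalDegree ≤ dQ := prod_tX_deg α s2
  have hbr : b + dP ≤ r := by
    rw [hPSK]
    omega
  have hcr : c + dQ ≤ r := by
    have h1 := hPSle (K+1)
    omega
  obtain ⟨τP, hτPs, hτPd, hPrep⟩ := clean s1 α
  obtain ⟨τQ, hτQs, hτQd, hQrep⟩ := clean s2 α
  have hsplitprod : (∏ i, tX n (α i) i) = tX n ((α istar : ℕ) : ℤ) istar * (P * Q) := by
    have h1 : (∏ i, tX n (α i) i) = P * ∏ j ∈ Finset.univ.filter
        (fun j : Fin n => ¬ (j : ℕ) < K), tX n (α j) j := by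
      rw [hPdef, hs1]
      exact (Finset.prod_filter_mul_prod_filter_not Finset.univ _ _).symm
    have h2 : Finset.univ.filter (fun j : Fin n => ¬ (j : ℕ) < K) = insert istar s2 := by
      ext j
      simp only [Finset.mem_filter, Finset.mem_univ, true_and, Finset.mem_insert, hs2,
        histar, Fin.ext_iff]
      omega
    have h3 : istar ∉ s2 := by
      rw [hs2]
      simp [histar]
    rw [h1, h2, Finset.prod_insert h3, ← hQdef]
    ring
  rw [hsplitprod, show ((α istar : ℕ) : ℤ) = ((b : ℤ) + (c : ℤ)) from by
    rw [← hbc]; push_cast; ring]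
  exact memQ_M r istar b c dP dQ P Q ε hε hdP hdQ τP τQ
    hτPs hτPd hPrep hτQs hτQd hQrep hbr hcr

end MvAux5

namespace CoeffAux

variable {n : ℕ}

open MvPolynomial

theorem coeff_prod_aeval (p : Fin n → Polynomial ℝ) (s : Finset (Fin n)) (μ : Fin n →₀ ℕ) :
    MvPolynomial.coeff μ (∏ i ∈ s, Polynomial.aeval (MvPolynomial.X i) (p i)) =
      if (∀ l, l ∉ s → μ l = 0) then ∏ i ∈ s, (p i).coeff (μ i) else 0 := by
  classical
  induction s using Finset.induction generalizing μ with
  | empty =>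
      simp only [Finset.prod_empty]
      rw [MvPolynomial.coeff_one]
      by_cases h : μ = 0
      · subst h
        simp
      · rw [if_neg (fun h0 => h h0.symm), if_neg ?_]
        intro hall
        exact h (Finsupp.ext fun l => hall l (by simp))
  | @insert a s ha ih =>
      rw [Finset.prod_insert ha]
      set B : MvPolynomial (Fin n) ℝ := ∏ i ∈ s, Polynomial.aeval (MvPolynomial.X i) (p i) with hB
      rw [Polynomial.aeval_eq_sum_range, Finset.sum_mul, MvPolynomial.coeff_sum]
      have hterm : ∀ j ∈ Finset.range ((p a).natDegree + 1),
          MvPolynomial.coeff μ (((p a).coeff j • MvPolynomial.X a ^ j) * B) =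
          if j = μ a then (p a).coeff j *
            MvPolynomial.coeff (μ - Finsupp.single a (μ a)) B else 0 := by
        intro j hj
        rw [smul_mul_assoc, MvPolynomial.coeff_smul, smul_eq_mul,
          MvPolynomial.X_pow_eq_monomial, MvPolynomial.coeff_monomial_mul']
        by_cases hja : j = μ a
        · subst hja
          rw [if_pos rfl, if_pos (Finsupp.single_le_iff.mpr le_rfl), one_mul]
        · rw [if_neg hja]
          by_cases hle : Finsupp.single a j ≤ μ
          · have hzero : MvPolynomial.coeff (μ - Finsupp.single a j) B = 0 := by
              rw [ih]
              apply if_neg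
              intro hall
              have hja' := hall a ha
              rw [Finsupp.tsub_apply, Finsupp.single_eq_same] at hja'
              have : j ≤ μ a := by simpa [Finsupp.single_le_iff] using hle
              omega
            rw [if_pos hle, one_mul, hzero, mul_zero]
          · rw [if_neg hle, mul_zero]
      rw [Finset.sum_congr rfl hterm, Finset.sum_ite_eq' (Finset.range ((p a).natDegree + 1))]
      by_cases hmem : μ a ∈ Finset.range ((p a).natDegree + 1)
      · rw [if_pos hmem, ih]
        have happ : ∀ i ∈ s, (μ - Finsupp.single a (μ a)) i = μ i := by
          intro i hi
          rw [Finsupp.tsub_apply, Finsupp.single_apply,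
            if_neg (by rintro rfl; exact ha hi), Nat.sub_zero]
        by_cases hcond : ∀ l, l ∉ insert a s → μ l = 0
        · rw [if_pos ?_, if_pos hcond, Finset.prod_insert ha,
            Finset.prod_congr rfl fun i hi => by rw [happ i hi]]
          intro l hl
          by_cases hla : l = a
          · subst hla
            rw [Finsupp.tsub_apply, Finsupp.single_eq_same, Nat.sub_self]
          · rw [Finsupp.tsub_apply, Finsupp.single_apply, if_neg (fun h => hla h.symm),
              Nat.sub_zero]
            exact hcond l (by simp [hla, hl])
        · rw [if_neg ?_, mul_zero, if_neg hcond]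
          intro hall
          apply hcond
          intro l hl
          have hls : l ∉ s := fun h => hl (Finset.mem_insert_of_mem h)
          have hla : l ≠ a := fun h => hl (h ▸ Finset.mem_insert_self a s)
          have := hall l hls
          rwa [Finsupp.tsub_apply, Finsupp.single_apply, if_neg (fun h => hla h.symm),
            Nat.sub_zero] at this
      · rw [if_neg hmem]
        have hco : (p a).coeff (μ a) = 0 := by
          apply Polynomial.coeff_eq_zero_of_natDegree_lt
          simp only [Finset.mem_range] at hmem
          omega
        rw [Finset.prod_insert ha, hco, zero_mul]
        simp

end CoeffAux

namespace FinalAux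
variable {n : ℕ}
open MvPolynomial ChebAux MvAux MvAux2 MvAux3 MvAux4 MvAux5 CoeffAux

/-- support degree bound -/
theorem support_bound (d : ℕ) (p : MvPolynomial (Fin n) ℝ) (hp : p.totalDegree ≤ d)
    (c : (Fin n → ℕ) →₀ ℝ) (hc : p = ∑ α ∈ c.support, c α • chebMv α) :
    ∀ α ∈ c.support, ∑ i, α i ≤ d := by
  classical
  by_contra hcon
  push_neg at hcon
  obtain ⟨α0, hα0mem, hα0⟩ := hcon
  obtain ⟨αs, hαsmem, hmax⟩ := Finset.exists_max_image c.support (fun α => ∑ i, α i)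
    ⟨α0, hα0mem⟩
  have hDs : d < ∑ i, αs i := lt_of_lt_of_le hα0 (hmax α0 hα0mem)
  set μ : Fin n →₀ ℕ := Finsupp.equivFunOnFinite.symm αs with hμdef
  have hμ : ∀ i, μ i = αs i := fun i => rfl
  have hμsum : (μ.sum fun _ e => e) = ∑ i, αs i := by
    rw [Finsupp.sum_fintype]
    · exact Finset.sum_congr rfl fun i _ => hμ i
    · intro i; rfl
  -- LHS coefficient is zero
  have h0 : MvPolynomial.coeff μ p = 0 := by
    by_contra hne
    have hmem : μ ∈ p.support := MvPolynomial.mem_support_iff.mpr hne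
    have := MvPolynomial.le_totalDegree hmem
    rw [hμsum] at this
    omega
  -- chebMv coefficient computation
  have hcheb : ∀ β : Fin n → ℕ, MvPolynomial.coeff μ (chebMv β) =
      ∏ i, (Polynomial.Chebyshev.T ℝ (β i)).coeff (αs i) := by
    intro β
    rw [chebMv, coeff_prod_aeval]
    rw [if_pos (fun l hl => absurd (Finset.mem_univ l) hl)]
    exact Finset.prod_congr rfl fun i _ => by rw [hμ i]
  have hzero : ∀ β ∈ c.support, β ≠ αs → MvPolynomial.coeff μ (chebMv β) = 0 := by
    intro β hβ hne
    rw [hcheb β]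
    by_contra hnz
    have hle : ∀ i, αs i ≤ β i := by
      intro i
      by_contra hlt
      push_neg at hlt
      refine hnz (Finset.prod_eq_zero (Finset.mem_univ i) ?_)
      apply Polynomial.coeff_eq_zero_of_natDegree_lt
      exact lt_of_le_of_lt (natDegree_T_le ℝ (β i)) hlt
    have hsum : ∑ i, β i ≤ ∑ i, αs i := hmax β hβ
    have : ∀ i, β i = αs i := by
      intro i
      by_contra hne2
      have hlt : αs i < β i := lt_of_le_of_ne (hle i) (fun h => hne2 h.symm)
      have : ∑ i, αs i < ∑ i, β i :=
        Finset.sum_lt_sum (fun j _ => hle j) ⟨i, Finset.mem_univ i, hlt⟩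
      omega
    exact hne (funext this)
  have hRHS : MvPolynomial.coeff μ p = c αs * ∏ i,
      (Polynomial.Chebyshev.T ℝ (αs i)).coeff (αs i) := by
    rw [hc, MvPolynomial.coeff_sum]
    rw [Finset.sum_eq_single αs]
    · rw [MvPolynomial.coeff_smul, smul_eq_mul, hcheb]
    · intro β hβ hne
      rw [MvPolynomial.coeff_smul, smul_eq_mul, hzero β hβ hne, mul_zero]
    · intro h
      exact absurd hαsmem h
  have hprodpos : 0 < ∏ i, (Polynomial.Chebyshev.T ℝ (αs i)).coeff (αs i) :=
    Finset.prod_pos fun i _ => coeff_T_self_pos (αs i)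
  have hcne : c αs ≠ 0 := Finsupp.mem_support_iff.mp hαsmem
  rw [hRHS] at h0
  exact hcne (by nlinarith [hprodpos])

end FinalAux

open FinalAux MvAux MvAux2 MvAux5 in
/-- Let `f` have degree at most `r`, let `f_min` be the minimum of `f` on
`[-1,1]ⁿ` and let `f_{(2r)} = sup {t : f - t ∈ Q(1-x₁², …, 1-xₙ²)_{2r}}`. Then for every
`q ∈ Q(1-x₁², …, 1-xₙ²)_{2r}`, with `∑_α c_α T_α` the Chebyshev expansion of
`f - f_min - q`, one has `f_min - f_{(2r)} ≤ ‖f - f_min - q‖_{1,cheb} = ∑_α |c_α|`. -/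
theorem lasserre_gap_le_chebNorm (n r : ℕ) (f : MvPolynomial (Fin n) ℝ)
    (hr : f.totalDegree ≤ r) (fmin : ℝ)
    (hmin : IsLeast ((fun x => MvPolynomial.eval x f) ''
      {x : Fin n → ℝ | ∀ i, x i ∈ Set.Icc (-1 : ℝ) 1}) fmin)
    (q : MvPolynomial (Fin n) ℝ) (hq : memCubeQM n (2 * r) q)
    (c : (Fin n → ℕ) →₀ ℝ)
    (hc : f - MvPolynomial.C fmin - q = ∑ α ∈ c.support, c α • chebMv α) :
    fmin - sSup {t : ℝ | memCubeQM n (2 * r) (f - MvPolynomial.C t)} ≤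
      ∑ α ∈ c.support, |c α| := by
  classical
  obtain ⟨hmem1, hlb⟩ := hmin
  obtain ⟨x₀, hx₀, hfx₀⟩ := hmem1
  simp only [Set.mem_setOf_eq] at hx₀
  have hfx₀ : MvPolynomial.eval x₀ f = fmin := hfx₀
  have hub : ∀ t ∈ {t : ℝ | memCubeQM n (2*r) (f - MvPolynomial.C t)}, t ≤ fmin := by
    intro t ht
    obtain ⟨σ0, σ, hs0, hs, _, _, hrep⟩ := ht
    have heval : MvPolynomial.eval x₀ (f - MvPolynomial.C t) = fmin - t := by
      rw [map_sub, MvPolynomial.eval_C, hfx₀]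
    have hnn : 0 ≤ MvPolynomial.eval x₀ (f - MvPolynomial.C t) := by
      rw [hrep, map_add]
      refine add_nonneg (eval_sumSq_nonneg hs0 x₀) ?_
      rw [map_sum]
      refine Finset.sum_nonneg fun i _ => ?_
      rw [map_mul]
      refine mul_nonneg ?_ (eval_sumSq_nonneg (hs i) x₀)
      have hxi := hx₀ i
      rw [Set.mem_Icc] at hxi
      simp only [map_sub, map_one, map_pow, MvPolynomial.eval_X]
      nlinarith [hxi.1, hxi.2]
    rw [heval] at hnn
    linarith
  have hbdd : BddAbove {t : ℝ | memCubeQM n (2*r) (f - MvPolynomial.C t)} := ⟨fmin, hub⟩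
  have hNnn : 0 ≤ ∑ α ∈ c.support, |c α| := Finset.sum_nonneg fun α _ => abs_nonneg _
  by_cases hr0 : r = 0
  · subst hr0
    have hdeg0 : f.totalDegree = 0 := le_antisymm (by simpa using hr) (Nat.zero_le _)
    have hsupzero := (MvPolynomial.totalDegree_eq_zero_iff _ f).mp hdeg0
    have hfC : f = MvPolynomial.C (MvPolynomial.coeff 0 f) := by
      apply MvPolynomial.ext
      intro m
      rw [MvPolynomial.coeff_C]
      by_cases hm : m = 0
      · subst hm; simp
      · rw [if_neg (fun h => hm h.symm)]
        by_contra hne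
        have hmem : m ∈ f.support := MvPolynomial.mem_support_iff.mpr hne
        exact hm (Finsupp.ext fun i => hsupzero m hmem i)
    have hfmin : fmin = MvPolynomial.coeff 0 f := by
      rw [hfC] at hfx₀
      rw [MvPolynomial.eval_C] at hfx₀
      exact hfx₀.symm
    have hmem : fmin ∈ {t : ℝ | memCubeQM n (2*0) (f - MvPolynomial.C t)} := by
      have : f - MvPolynomial.C fmin = 0 := by rw [hfC, ← hfmin, sub_self]
      rw [Set.mem_setOf_eq, this]
      exact ⟨0, 0, IsSumSq.zero, fun _ => IsSumSq.zero, by simp, fun _ => by simp, by simp⟩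
    have hsup : fmin ≤ sSup {t : ℝ | memCubeQM n (2*0) (f - MvPolynomial.C t)} :=
      le_csSup hbdd hmem
    linarith
  · have hr1 : 1 ≤ r := by omega
    have hqdeg : q.totalDegree ≤ 2*r := by
      obtain ⟨σ0, σ, _, _, h0d, hσd, hrep⟩ := hq
      rw [hrep]
      refine le_trans (MvPolynomial.totalDegree_add _ _) ?_
      rw [max_le_iff]
      refine ⟨h0d, ?_⟩
      refine le_trans (MvPolynomial.totalDegree_finset_sum _ _) ?_
      refine Finset.sup_le fun i _ => ?_
      refine le_trans (MvPolynomial.totalDegree_mul _ _) ?_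
      have h1 : (1 - MvPolynomial.X i ^ 2 : MvPolynomial (Fin n) ℝ).totalDegree ≤ 2 := by
        refine le_trans (MvPolynomial.totalDegree_sub _ _) ?_
        simp [MvPolynomial.totalDegree_one, MvPolynomial.totalDegree_X_pow]
      have := hσd i
      omega
    have hpdeg : (f - MvPolynomial.C fmin - q).totalDegree ≤ 2*r := by
      refine le_trans (MvPolynomial.totalDegree_sub _ _) ?_
      rw [max_le_iff]
      constructor
      · refine le_trans (MvPolynomial.totalDegree_sub _ _) ?_
        rw [max_le_iff]
        refine ⟨by omega, by simp [MvPolynomial.totalDegree_C]⟩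
      · exact hqdeg
    have hsupp := support_bound (2*r) _ hpdeg c hc
    have hmem : (fmin - ∑ α ∈ c.support, |c α|) ∈
        {t : ℝ | memCubeQM n (2*r) (f - MvPolynomial.C t)} := by
      have hre : f - MvPolynomial.C (fmin - ∑ α ∈ c.support, |c α|) =
          (∑ α ∈ c.support, (c α • chebMv α + MvPolynomial.C |c α|)) + q := by
        rw [Finset.sum_add_distrib, ← hc, ← map_sum, map_sub]
        ring
      rw [Set.mem_setOf_eq, hre]
      refine memQ_add (memQ_sum _ _ fun α hα => ?_) hq
      rcases le_or_gt 0 (c α) with hpos | hneg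
      · have he : c α • chebMv α + MvPolynomial.C |c α| =
            |c α| • (1 - (-1 : ℝ) • chebMv α) := by
          rw [abs_of_nonneg hpos]
          simp only [MvPolynomial.smul_eq_C_mul, map_neg, map_one]
          ring
        rw [he]
        exact memQ_smul (abs_nonneg _) (key r α (hsupp α hα) (-1) (Or.inr rfl))
      · have he : c α • chebMv α + MvPolynomial.C |c α| =
            |c α| • (1 - (1 : ℝ) • chebMv α) := by
          rw [abs_of_neg hneg]
          simp only [MvPolynomial.smul_eq_C_mul, map_neg, map_one]
          ring
        rw [he]
        exact memQ_smul (abs_nonneg _) (key r α (hsupp α hα) 1 (Or.inl rfl))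
    have hsup : fmin - ∑ α ∈ c.support, |c α| ≤
        sSup {t : ℝ | memCubeQM n (2*r) (f - MvPolynomial.C t)} := le_csSup hbdd hmem
    linarith
end

section
/- Let σ > 0, let 1 ≤ R, let δ ∈ (0,1), set b := (R+1)²/(4σ²), and let s be a univariate real polynomial such that |exp(−2t) − s(t)²| ≤ 3δ for all t ∈ [0,b]. Define K(x,y) := (1/(√(2π)σ)) · s((x−y)²/(4σ²))². Then for every k ∈ ℕ and every x ∈ [−1,1], | ∫_{−R}^{R} K(x,y) T_k(y) dy − ∫_{−R}^{R} K_G^σ(x,y) T_k(y) dy | ≤ 2R · (3δ/(√(2π)σ)) · max_{y ∈ [−R,R]} |T_k(y)|. Moreover, if k ≥ 1 and R ≤ 1 + 1/(10k²), then this quantity is at most 24δ/(√(2π)σ). -/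
open Polynomial Finset MeasureTheory

/-- The Gauss–Weierstrass kernel `K_G^σ(x,y) = (1/(√(2π)σ)) exp(-(x-y)²/(2σ²))`. -/
noncomputable def gaussKernel (σ x y : ℝ) : ℝ :=
  (Real.sqrt (2 * Real.pi) * σ)⁻¹ * Real.exp (-(x - y) ^ 2 / (2 * σ ^ 2))

/-- The SOS kernel `K(x,y) = (1/(√(2π)σ)) s((x-y)²/(4σ²))²`. -/
noncomputable def sosKernel (σ : ℝ) (s : Polynomial ℝ) (x y : ℝ) : ℝ :=
  (Real.sqrt (2 * Real.pi) * σ)⁻¹ * (s.eval ((x - y) ^ 2 / (4 * σ ^ 2))) ^ 2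

lemma cheb_eval_aux (w : ℝ) (hw : w ≠ 0) (k : ℕ) :
    (Chebyshev.T ℝ k).eval ((w + w⁻¹) / 2) = (w ^ k + w⁻¹ ^ k) / 2 := by
  induction k using Nat.twoStepInduction with
  | zero => simp [Chebyshev.T_zero]
  | one => simp [Chebyshev.T_one]
  | more k ih1 ih2 =>
    have hc : ((k + 2 : ℕ) : ℤ) = (k : ℤ) + 2 := by push_cast; ring
    have hc1 : ((k + 1 : ℕ) : ℤ) = (k : ℤ) + 1 := by push_cast; ring
    rw [hc, Chebyshev.T_add_two]
    rw [hc1] at ih2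
    simp only [eval_sub, eval_mul, eval_X, eval_ofNat, ih2, ih1]
    field_simp
    linear_combination (w - w⁻¹) * w⁻¹ ^ k * mul_inv_cancel₀ hw

set_option maxHeartbeats 1000000 in
lemma cheb_abs_le (k : ℕ) (hk : 1 ≤ k) (y : ℝ) (hy : |y| ≤ 1 + 1 / (10 * (k : ℝ) ^ 2)) :
    |(Chebyshev.T ℝ k).eval y| ≤ 3 := by
  have hk0 : (0 : ℝ) < (k : ℝ) := by exact_mod_cast hk
  have hk1 : (1 : ℝ) ≤ (k : ℝ) := by exact_mod_cast hk
  set ε : ℝ := 1 / (10 * (k : ℝ) ^ 2) with hε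
  clear_value ε
  have hε0 : 0 < ε := by rw [hε]; positivity
  have hε10 : ε ≤ 1 / 10 := by
    rw [hε]
    rw [div_le_div_iff₀ (by positivity) (by norm_num)]
    nlinarith
  rcases le_or_gt (|y|) 1 with h1 | h1
  · -- |y| ≤ 1 : use cosine
    have hy1 : -1 ≤ y := (abs_le.1 h1).1
    have hy2 : y ≤ 1 := (abs_le.1 h1).2
    have := Chebyshev.T_real_cos (Real.arccos y) (k : ℤ)
    rw [Real.cos_arccos hy1 hy2] at this
    rw [show ((k : ℤ) : ℝ) = (k : ℝ) by push_cast; ring] at this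
    rw [show (Chebyshev.T ℝ (k : ℤ)).eval y = Real.cos ((k : ℝ) * Real.arccos y) from this]
    calc |Real.cos _| ≤ 1 := Real.abs_cos_le_one _
      _ ≤ 3 := by norm_num
  · -- 1 < |y|
    set u : ℝ := |y| with hu
    clear_value u
    have hu1 : 1 < u := h1
    have hud : (0:ℝ) ≤ u ^ 2 - 1 := by nlinarith
    set d : ℝ := Real.sqrt (u ^ 2 - 1) with hd
    clear_value d
    have hd0 : 0 ≤ d := hd ▸ Real.sqrt_nonneg _
    have hdsq : d ^ 2 = u ^ 2 - 1 := hd ▸ Real.sq_sqrt hud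
    set w : ℝ := u + d with hw
    clear_value w
    have hw1 : 1 ≤ w := by nlinarith
    have hw0 : w ≠ 0 := by intro h; rw [h] at hw1; linarith
    have hmul : w * (u - d) = 1 := by rw [hw]; nlinarith
    have hwinv : w⁻¹ = u - d := inv_eq_of_mul_eq_one_right hmul
    have hwiv0 : 0 < w⁻¹ := by rw [hwinv]; nlinarith
    have hwiv1 : w⁻¹ ≤ 1 := by
      rw [inv_le_one_iff₀]; right; exact hw1
    have huval : (w + w⁻¹) / 2 = u := by rw [hwinv, hw]; ring
    -- |T_k(y)| ≤ w^k
    have hwk1 : 1 ≤ w ^ k := one_le_pow₀ hw1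
    have hbound : |(Chebyshev.T ℝ k).eval y| ≤ w ^ k := by
      rcases le_or_gt 0 y with hy0 | hy0
      · have : y = (w + w⁻¹) / 2 := by rw [huval, hu, abs_of_nonneg hy0]
        rw [this, cheb_eval_aux w hw0]
        rw [abs_of_nonneg (by positivity)]
        have : w⁻¹ ^ k ≤ 1 := pow_le_one₀ (le_of_lt hwiv0) hwiv1
        linarith
      · have hwn : (-w) ≠ 0 := by simpa using hw0
        have hyu : y = -u := by rw [hu, abs_of_neg hy0]; ring
        have hkey : y = ((-w) + (-w)⁻¹) / 2 := by
          rw [inv_neg, hyu, ← huval]; ring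
        rw [hkey, cheb_eval_aux (-w) hwn]
        have h2 : |(-w) ^ k| = w ^ k := by
          rw [abs_pow, abs_neg, abs_of_pos (by linarith)]
        have h3 : |(-w)⁻¹ ^ k| = w⁻¹ ^ k := by
          rw [abs_pow, abs_inv, abs_neg, abs_of_pos (by linarith)]
        have h4 : w⁻¹ ^ k ≤ 1 := pow_le_one₀ (le_of_lt hwiv0) hwiv1
        have h1' : |((-w) ^ k + (-w)⁻¹ ^ k) / 2| ≤ (|(-w) ^ k| + |(-w)⁻¹ ^ k|) / 2 := by
          rw [abs_div, abs_two]
          linarith [abs_add_le ((-w) ^ k) ((-w)⁻¹ ^ k)]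
        rw [h2, h3] at h1'
        linarith
    -- now bound w^k ≤ 3
    set a : ℝ := ε + Real.sqrt (3 * ε) with ha
    clear_value a
    have ha0 : 0 ≤ a := by rw [ha]; positivity
    have hda : d ≤ Real.sqrt (3 * ε) := by
      rw [hd]
      apply Real.sqrt_le_sqrt
      have huε : u ≤ 1 + ε := hy
      nlinarith
    have hwa : w ≤ 1 + a := by
      rw [hw, ha]
      have : u ≤ 1 + ε := hy
      linarith
    have hksqrt : (k : ℝ) * Real.sqrt (3 * ε) = Real.sqrt (3 / 10) := by
      rw [show (k : ℝ) = Real.sqrt ((k:ℝ) ^ 2) from (Real.sqrt_sq hk0.le).symm,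
        ← Real.sqrt_mul (by positivity)]
      congr 1
      rw [hε]
      field_simp
    have hs310 : Real.sqrt (3 / 10) ≤ 11 / 20 :=
      (Real.sqrt_le_left (by norm_num)).2 (by norm_num)
    have hkε : (k : ℝ) * ε = 1 / (10 * (k:ℝ)) := by
      rw [hε]; field_simp
    have hkε' : 1 / (10 * (k:ℝ)) ≤ 1 / 10 := by
      rw [div_le_div_iff₀ (by positivity) (by norm_num)]
      nlinarith
    have hka : (k : ℝ) * a ≤ 13 / 20 := by
      rw [ha, mul_add, hkε, hksqrt]
      linarith
    have ha1 : a ≤ 13 / 20 := by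
      have : a ≤ (k : ℝ) * a := le_mul_of_one_le_left ha0 hk1
      linarith
    have hbern : 1 - (k : ℝ) * a ≤ (1 - a) ^ k := by
      have := one_add_mul_le_pow (a := -a) (by linarith) k
      simpa [sub_eq_add_neg, mul_neg] using this
    have h1a : (0:ℝ) < 1 - a := by linarith
    have hprod : (1 + a) ^ k * (1 - a) ^ k ≤ 1 := by
      rw [← mul_pow]
      exact pow_le_one₀ (by nlinarith) (by nlinarith)
    have h35 : (7 / 20 : ℝ) ≤ (1 - a) ^ k := by linarith
    have hwk3 : w ^ k ≤ 3 := by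
      have hwk : w ^ k ≤ (1 + a) ^ k := pow_le_pow_left₀ (by linarith) hwa k
      nlinarith [pow_pos h1a k]
    linarith

/-- Let `σ > 0`, `R ≥ 1`, `δ ∈ (0,1)`, `b = (R+1)²/(4σ²)`, and let `s` be a
polynomial with `|exp(-2t) - s(t)²| ≤ 3δ` on `[0,b]`. Then for every `k` and `x ∈ [-1,1]`,
`|∫_{-R}^R K(x,y)T_k(y) dy - ∫_{-R}^R K_G^σ(x,y)T_k(y) dy|
  ≤ 2R (3δ/(√(2π)σ)) max_{y∈[-R,R]} |T_k(y)|`,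
and moreover if `k ≥ 1` and `R ≤ 1 + 1/(10k²)` this is at most `24δ/(√(2π)σ)`. -/
theorem sos_kernel_vs_gauss_kernel (σ : ℝ) (hσ : 0 < σ) (R : ℝ) (hR : 1 ≤ R)
    (δ : ℝ) (hδ : δ ∈ Set.Ioo (0 : ℝ) 1) (s : Polynomial ℝ)
    (hs : ∀ t ∈ Set.Icc (0 : ℝ) ((R + 1) ^ 2 / (4 * σ ^ 2)),
      |Real.exp (-2 * t) - (s.eval t) ^ 2| ≤ 3 * δ)
    (k : ℕ) (x : ℝ) (hx : x ∈ Set.Icc (-1 : ℝ) 1) :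
    |(∫ y in (-R)..R, sosKernel σ s x y * (Chebyshev.T ℝ k).eval y) -
        ∫ y in (-R)..R, gaussKernel σ x y * (Chebyshev.T ℝ k).eval y| ≤
      2 * R * (3 * δ / (Real.sqrt (2 * Real.pi) * σ)) *
        ⨆ y : Set.Icc (-R) R, |(Chebyshev.T ℝ k).eval (y : ℝ)| ∧
    (1 ≤ k → R ≤ 1 + 1 / (10 * (k : ℝ) ^ 2) →
      |(∫ y in (-R)..R, sosKernel σ s x y * (Chebyshev.T ℝ k).eval y) -
          ∫ y in (-R)..R, gaussKernel σ x y * (Chebyshev.T ℝ k).eval y| ≤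
        24 * δ / (Real.sqrt (2 * Real.pi) * σ)) := by
  obtain ⟨hδ0, hδ1⟩ := hδ
  obtain ⟨hx1, hx2⟩ := hx
  have hRR : -R ≤ R := by linarith
  have hD : 0 < Real.sqrt (2 * Real.pi) * σ :=
    mul_pos (Real.sqrt_pos.2 (by positivity)) hσ
  set D : ℝ := Real.sqrt (2 * Real.pi) * σ with hDdef
  set M : ℝ := ⨆ y : Set.Icc (-R) R, |(Chebyshev.T ℝ k).eval (y : ℝ)| with hMdef
  haveI : Nonempty (Set.Icc (-R) R) := Set.nonempty_Icc.2 hRR |>.to_subtype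
  have hbdd : BddAbove (Set.range fun y : Set.Icc (-R) R =>
      |(Chebyshev.T ℝ k).eval (y : ℝ)|) := by
    have h1 : Set.range (fun y : Set.Icc (-R) R => |(Chebyshev.T ℝ k).eval (y : ℝ)|) =
        (fun z : ℝ => |(Chebyshev.T ℝ k).eval z|) '' Set.Icc (-R) R := by
      rw [show (fun y : Set.Icc (-R) R => |(Chebyshev.T ℝ k).eval (y : ℝ)|) =
        (fun z : ℝ => |(Chebyshev.T ℝ k).eval z|) ∘ Subtype.val from rfl,
        Set.range_comp, Subtype.range_coe]
    rw [h1]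
    exact (isCompact_Icc.image
      (continuous_abs.comp ((Chebyshev.T ℝ k).continuous))).bddAbove
  have hM : ∀ y ∈ Set.Icc (-R) R, |(Chebyshev.T ℝ k).eval y| ≤ M :=
    fun y hy => le_ciSup hbdd (⟨y, hy⟩ : Set.Icc (-R) R)
  have hM0 : 0 ≤ M :=
    le_trans (abs_nonneg _) (hM R ⟨hRR, le_refl R⟩)
  have hTc : Continuous fun y : ℝ => (Chebyshev.T ℝ k).eval y := (Chebyshev.T ℝ k).continuous
  have hcont1 : Continuous fun y => sosKernel σ s x y * (Chebyshev.T ℝ k).eval y := by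
    unfold sosKernel
    exact (continuous_const.mul ((s.continuous.comp (by fun_prop)).pow 2)).mul hTc
  have hcont2 : Continuous fun y => gaussKernel σ x y * (Chebyshev.T ℝ k).eval y := by
    unfold gaussKernel
    exact (continuous_const.mul (Real.continuous_exp.comp (by fun_prop))).mul hTc
  have key : |(∫ y in (-R)..R, sosKernel σ s x y * (Chebyshev.T ℝ k).eval y) -
      ∫ y in (-R)..R, gaussKernel σ x y * (Chebyshev.T ℝ k).eval y| ≤
      2 * R * (3 * δ / D * M) := by
    rw [← intervalIntegral.integral_sub (hcont1.intervalIntegrable _ _)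
      (hcont2.intervalIntegrable _ _)]
    have := intervalIntegral.norm_integral_le_of_norm_le_const (a := -R) (b := R)
      (C := 3 * δ / D * M)
      (f := fun y => sosKernel σ s x y * (Chebyshev.T ℝ k).eval y -
        gaussKernel σ x y * (Chebyshev.T ℝ k).eval y) ?_
    · rw [Real.norm_eq_abs] at this
      refine this.trans (le_of_eq ?_)
      rw [abs_of_nonneg (by linarith : (0:ℝ) ≤ R - -R)]
      ring
    · intro y hy
      rw [Set.uIoc_of_le hRR] at hy
      obtain ⟨hy1, hy2⟩ := hy
      set t : ℝ := (x - y) ^ 2 / (4 * σ ^ 2) with ht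
      have ht0 : 0 ≤ t := by positivity
      have hxy : (x - y) ^ 2 ≤ (R + 1) ^ 2 := by
        nlinarith [mul_nonneg (by linarith : (0:ℝ) ≤ 1 - x) (by linarith : (0:ℝ) ≤ R - y),
          mul_nonneg (by linarith : (0:ℝ) ≤ 1 + x) (by linarith : (0:ℝ) ≤ R + y)]
      have ht1 : t ≤ (R + 1) ^ 2 / (4 * σ ^ 2) := by
        rw [ht]; gcongr
      have hsδ : |(s.eval t) ^ 2 - Real.exp (-2 * t)| ≤ 3 * δ := by
        rw [abs_sub_comm]; exact hs t ⟨ht0, ht1⟩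
      have hdiff : sosKernel σ s x y - gaussKernel σ x y =
          D⁻¹ * ((s.eval t) ^ 2 - Real.exp (-2 * t)) := by
        unfold sosKernel gaussKernel
        rw [hDdef, ht]
        have : -(x - y) ^ 2 / (2 * σ ^ 2) = -2 * ((x - y) ^ 2 / (4 * σ ^ 2)) := by
          field_simp; ring
        rw [this]
        ring
      have hTy : |(Chebyshev.T ℝ k).eval y| ≤ M := hM y ⟨le_of_lt hy1, hy2⟩
      simp only [Real.norm_eq_abs]
      rw [show sosKernel σ s x y * (Chebyshev.T ℝ k).eval y -
          gaussKernel σ x y * (Chebyshev.T ℝ k).eval y =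
          (sosKernel σ s x y - gaussKernel σ x y) * (Chebyshev.T ℝ k).eval y by ring,
        abs_mul, hdiff, abs_mul, abs_inv, abs_of_pos hD]
      rw [div_eq_mul_inv, mul_comm (3 * δ) D⁻¹, mul_assoc D⁻¹ (3 * δ) M, mul_assoc]
      exact mul_le_mul_of_nonneg_left
        (mul_le_mul hsδ hTy (abs_nonneg _) (by linarith : (0:ℝ) ≤ 3 * δ))
        (inv_nonneg.2 hD.le)
  constructor
  · exact key.trans (le_of_eq (by rw [hMdef]; ring))
  · intro hk hR2
    have hM3 : M ≤ 3 := by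
      apply ciSup_le
      intro y
      apply cheb_abs_le k hk
      have : |(y : ℝ)| ≤ R := abs_le.2 ⟨y.2.1, y.2.2⟩
      linarith
    have hk1 : (1:ℝ) ≤ (k:ℝ) := by exact_mod_cast hk
    have hR11 : R ≤ 11 / 10 := by
      have : 1 / (10 * (k:ℝ) ^ 2) ≤ 1 / 10 := by
        rw [div_le_div_iff₀ (by positivity) (by norm_num)]
        nlinarith
      linarith
    refine key.trans ?_
    rw [div_eq_mul_inv, div_eq_mul_inv]
    have hDi : 0 < D⁻¹ := by positivity
    have hRM : R * M ≤ 33 / 10 := by nlinarith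
    nlinarith [mul_pos hδ0 hDi, mul_le_mul_of_nonneg_left hRM
      (le_of_lt (by positivity : (0:ℝ) < 6 * (δ * D⁻¹)))]
end

section
/- Let σ > 0, R ≥ 1, let s be a univariate real polynomial, and let f be a univariate real polynomial that is nonnegative on the interval [−R,R]. Then the function x ↦ ∫_{−R}^{R} (1/(√(2π)σ)) · s((x−y)²/(4σ²))² · f(y) dy equals a polynomial in x of degree at most 4·deg(s) that is a sum of squares of polynomials. -/
open Polynomial Finset MeasureTheory

set_option maxHeartbeats 1000000

/-- Let `σ > 0`, `R ≥ 1`, let `s` be a univariate real polynomial and `f`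
a univariate real polynomial nonnegative on `[-R,R]`. Then
`x ↦ ∫_{-R}^R (1/(√(2π)σ)) s((x-y)²/(4σ²))² f(y) dy` agrees with a polynomial of degree at
most `4 deg s` that is a sum of squares of polynomials. -/
theorem sos_kernel_maps_nonneg_to_sos (σ : ℝ) (hσ : 0 < σ) (R : ℝ) (hR : 1 ≤ R)
    (s f : Polynomial ℝ) (hf : ∀ y ∈ Set.Icc (-R) R, 0 ≤ f.eval y) :
    ∃ g : Polynomial ℝ, IsSumSq g ∧ g.natDegree ≤ 4 * s.natDegree ∧
      ∀ x : ℝ, g.eval x =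
        ∫ y in (-R)..R,
          (Real.sqrt (2 * Real.pi) * σ)⁻¹ *
            (s.eval ((x - y) ^ 2 / (4 * σ ^ 2))) ^ 2 * f.eval y := by
  classical
  set c : ℝ := (Real.sqrt (2 * Real.pi) * σ)⁻¹ with hcdef
  have hc : 0 ≤ c := by positivity
  have hRR : (-R) ≤ R := by linarith
  set N : ℕ := 2 * s.natDegree with hN
  -- the kernel as a polynomial in x with coefficients polynomials in y
  set u : Polynomial (Polynomial ℝ) :=
      Polynomial.C (Polynomial.C ((4 * σ ^ 2)⁻¹)) * (Polynomial.X - Polynomial.C Polynomial.X) ^ 2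
      with hu
  set Q : Polynomial (Polynomial ℝ) := (s.map Polynomial.C).comp u with hQ
  have hudeg : u.natDegree ≤ 2 := by
    refine le_trans (natDegree_mul_le) ?_
    have h1 : (Polynomial.C (Polynomial.C ((4 * σ ^ 2)⁻¹))).natDegree = 0 := natDegree_C _
    have h2 : ((Polynomial.X - Polynomial.C (Polynomial.X : Polynomial ℝ)) ^ 2).natDegree ≤ 2 := by
      refine le_trans (natDegree_pow_le) ?_
      have h3 := natDegree_X_sub_C (Polynomial.X : Polynomial ℝ)
      omega
    omega
  have hQdeg : Q.natDegree < N + 1 := by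
    have h1 : Q.natDegree ≤ (s.map (Polynomial.C)).natDegree * u.natDegree :=
      natDegree_comp_le
    have h2 : (s.map (Polynomial.C : ℝ →+* Polynomial ℝ)).natDegree ≤ s.natDegree :=
      natDegree_map_le
    have : Q.natDegree ≤ N := by
      calc Q.natDegree ≤ (s.map (Polynomial.C)).natDegree * u.natDegree := h1
        _ ≤ s.natDegree * 2 := Nat.mul_le_mul h2 hudeg
        _ = N := by rw [hN]; ring
    omega
  set b : Fin (N + 1) → Polynomial ℝ := fun k => Q.coeff k with hb
  -- key pointwise identity
  have key : ∀ x y : ℝ,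
      s.eval ((x - y) ^ 2 / (4 * σ ^ 2)) = ∑ k : Fin (N + 1), (b k).eval y * x ^ (k : ℕ) := by
    intro x y
    have hφ := Polynomial.eval₂_eq_sum_range' (Polynomial.evalRingHom y) hQdeg x
    rw [Fin.sum_univ_eq_sum_range (fun k => (Q.coeff k).eval y * x ^ k) (N + 1)]
    have hcomp : Polynomial.eval₂ (Polynomial.evalRingHom y) x Q
        = s.eval ((x - y) ^ 2 / (4 * σ ^ 2)) := by
      rw [hQ, Polynomial.eval₂_comp]
      have hux : Polynomial.eval₂ (Polynomial.evalRingHom y) x u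
          = (x - y) ^ 2 / (4 * σ ^ 2) := by
        rw [hu, Polynomial.eval₂_mul, Polynomial.eval₂_C, Polynomial.eval₂_pow,
          Polynomial.eval₂_sub, Polynomial.eval₂_X, Polynomial.eval₂_C]
        simp [div_eq_inv_mul]
      rw [hux, Polynomial.eval₂_map]
      have hid : (Polynomial.evalRingHom y).comp (Polynomial.C : ℝ →+* Polynomial ℝ)
          = RingHom.id ℝ := by
        ext r; simp
      rw [hid]
      rfl
    rw [← hcomp, hφ]
    simp [hb]
  -- integrability
  have hint : ∀ p : Polynomial ℝ,
      IntervalIntegrable (fun y => p.eval y) volume (-R) R :=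
    fun p => (p.continuous).intervalIntegrable _ _
  have hint' : ∀ (j k : Fin (N + 1)),
      IntervalIntegrable (fun y => c * f.eval y * (b j).eval y * (b k).eval y)
        volume (-R) R := by
    intro j k
    have := hint (Polynomial.C c * f * b j * b k)
    simpa [mul_assoc, mul_comm, mul_left_comm] using this
  -- the Gram matrix
  set M : Matrix (Fin (N + 1)) (Fin (N + 1)) ℝ :=
    fun j k => ∫ y in (-R)..R, c * f.eval y * (b j).eval y * (b k).eval y with hM
  have hMsymm : ∀ j k, M j k = M k j := by
    intro j k
    simp only [hM]
    congr 1; funext y; ring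
  have hMpsd : M.PosSemidef := by
    rw [Matrix.posSemidef_iff_dotProduct_mulVec]
    constructor
    · ext j k
      simpa [Matrix.conjTranspose_apply] using (hMsymm k j)
    · intro v
      have hrw : dotProduct (star v) (M.mulVec v)
          = ∫ y in (-R)..R, c * f.eval y * (∑ j : Fin (N + 1), v j * (b j).eval y) ^ 2 := by
        simp only [dotProduct, Matrix.mulVec, star, Pi.star_apply, star_trivial]
        have : ∀ j : Fin (N+1), v j * (∑ k : Fin (N+1), M j k * v k)
            = ∫ y in (-R)..R, ∑ k : Fin (N+1),
                v j * (c * f.eval y * (b j).eval y * (b k).eval y) * v k := by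
          intro j
          rw [intervalIntegral.integral_finset_sum
            (fun k _ => ((hint' j k).const_mul (v j)).mul_const (v k))]
          rw [Finset.mul_sum]
          refine Finset.sum_congr rfl fun k _ => ?_
          have hMjk : M j k = ∫ y in (-R)..R,
              c * f.eval y * (b j).eval y * (b k).eval y := rfl
          rw [hMjk, ← intervalIntegral.integral_mul_const,
            ← intervalIntegral.integral_const_mul]
          congr 1; funext y; ring
        calc (∑ j : Fin (N+1), v j * ∑ k, M j k * v k)
            = ∑ j : Fin (N+1), ∫ y in (-R)..R, ∑ k : Fin (N+1),
                v j * (c * f.eval y * (b j).eval y * (b k).eval y) * v k := by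
              exact Finset.sum_congr rfl fun j _ => this j
          _ = ∫ y in (-R)..R, ∑ j : Fin (N+1), ∑ k : Fin (N+1),
                v j * (c * f.eval y * (b j).eval y * (b k).eval y) * v k := by
              have hin : ∀ j : Fin (N+1), IntervalIntegrable
                  (fun y => ∑ k : Fin (N+1),
                    v j * (c * f.eval y * (b j).eval y * (b k).eval y) * v k)
                  volume (-R) R := by
                intro j
                have h0 := IntervalIntegrable.sum (μ := volume) (a := -R) (b := R)
                  Finset.univ (fun k (_ : k ∈ Finset.univ) =>
                    ((hint' j k).const_mul (v j)).mul_const (v k))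
                have heq : (fun y => ∑ k : Fin (N+1),
                    v j * (c * f.eval y * (b j).eval y * (b k).eval y) * v k)
                    = ∑ k : Fin (N+1), fun y =>
                      v j * (c * f.eval y * (b j).eval y * (b k).eval y) * v k := by
                  funext y; simp
                rw [heq]; exact h0
              exact (intervalIntegral.integral_finset_sum (fun j _ => hin j)).symm
          _ = ∫ y in (-R)..R, c * f.eval y * (∑ j : Fin (N + 1), v j * (b j).eval y) ^ 2 := by
              congr 1; funext y
              rw [sq, Finset.sum_mul_sum]
              rw [Finset.mul_sum]
              refine Finset.sum_congr rfl fun j _ => ?_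
              rw [Finset.mul_sum]
              refine Finset.sum_congr rfl fun k _ => ?_
              ring
      rw [hrw]
      apply intervalIntegral.integral_nonneg hRR
      intro y hy
      have := hf y hy
      positivity
  obtain ⟨B, hB⟩ : ∃ B : Matrix (Fin (N + 1)) (Fin (N + 1)) ℝ, M = B.conjTranspose * B := by
    open scoped MatrixOrder in
    obtain ⟨X, hX, -, hXX⟩ := CFC.exists_sqrt_of_isSelfAdjoint_of_quasispectrumRestricts
      hMpsd.isHermitian (QuasispectrumRestricts.nnreal_of_nonneg hMpsd.nonneg)
    exact ⟨X, by rw [show X.conjTranspose = X from hX.star_eq, hXX]; rfl⟩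
  have hMentry : ∀ j k, M j k = ∑ i : Fin (N+1), B i j * B i k := by
    intro j k
    rw [hB]
    simp [Matrix.mul_apply, Matrix.conjTranspose_apply]
  -- the SOS polynomial
  refine ⟨∑ i : Fin (N+1), (∑ j : Fin (N+1), Polynomial.C (B i j) * Polynomial.X ^ (j : ℕ)) ^ 2,
    ?_, ?_, ?_⟩
  · have := IsSumSq.sum_mul_self (Finset.univ : Finset (Fin (N+1)))
      (fun i => ∑ j : Fin (N+1), Polynomial.C (B i j) * Polynomial.X ^ (j : ℕ))
    simpa [sq] using this
  · refine Polynomial.natDegree_sum_le_of_forall_le _ _ fun i _ => ?_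
    refine le_trans (natDegree_pow_le) ?_
    have : (∑ j : Fin (N+1), Polynomial.C (B i j) * Polynomial.X ^ (j : ℕ)).natDegree ≤ N := by
      refine Polynomial.natDegree_sum_le_of_forall_le _ _ fun j _ => ?_
      refine le_trans (natDegree_mul_le) ?_
      simp [natDegree_pow]
      omega
    calc 2 * (∑ j : Fin (N+1), Polynomial.C (B i j) * Polynomial.X ^ (j : ℕ)).natDegree
        ≤ 2 * N := by omega
      _ = 4 * s.natDegree := by rw [hN]; ring
  · intro x
    have heval : (∑ i : Fin (N+1),
        (∑ j : Fin (N+1), Polynomial.C (B i j) * Polynomial.X ^ (j : ℕ)) ^ 2).eval x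
        = ∑ j : Fin (N+1), ∑ k : Fin (N+1), M j k * (x ^ (j : ℕ) * x ^ (k : ℕ)) := by
      rw [Polynomial.eval_finset_sum]
      simp only [Polynomial.eval_pow, Polynomial.eval_finset_sum, Polynomial.eval_mul,
        Polynomial.eval_C, Polynomial.eval_X]
      have hsq : ∀ i : Fin (N+1), (∑ j : Fin (N+1), B i j * x ^ (j:ℕ)) ^ 2
          = ∑ j : Fin (N+1), ∑ k : Fin (N+1), B i j * B i k * (x ^ (j:ℕ) * x ^ (k:ℕ)) := by
        intro i
        rw [sq, Finset.sum_mul_sum]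
        exact Finset.sum_congr rfl fun j _ => Finset.sum_congr rfl fun k _ => by ring
      rw [Finset.sum_congr rfl fun i _ => hsq i]
      rw [Finset.sum_comm]
      refine Finset.sum_congr rfl fun j _ => ?_
      rw [Finset.sum_comm]
      refine Finset.sum_congr rfl fun k _ => ?_
      rw [hMentry j k, Finset.sum_mul]
    rw [heval]
    have hterm : ∀ (j k : Fin (N+1)), IntervalIntegrable
        (fun y => c * f.eval y * ((b j).eval y * x ^ (j:ℕ)) * ((b k).eval y * x ^ (k:ℕ)))
        volume (-R) R := by
      intro j k
      exact (((continuous_const.mul f.continuous).mul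
        ((b j).continuous.mul continuous_const)).mul
        ((b k).continuous.mul continuous_const)).intervalIntegrable _ _
    have hMx : ∀ j k : Fin (N+1), M j k * (x ^ (j:ℕ) * x ^ (k:ℕ))
        = ∫ y in (-R)..R,
            c * f.eval y * ((b j).eval y * x ^ (j:ℕ)) * ((b k).eval y * x ^ (k:ℕ)) := by
      intro j k
      rw [hM]
      dsimp only
      rw [← intervalIntegral.integral_mul_const]
      congr 1; funext y; ring
    calc (∑ j : Fin (N+1), ∑ k : Fin (N+1), M j k * (x ^ (j:ℕ) * x ^ (k:ℕ)))
        = ∫ y in (-R)..R, ∑ j : Fin (N+1), ∑ k : Fin (N+1),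
            c * f.eval y * ((b j).eval y * x ^ (j:ℕ)) * ((b k).eval y * x ^ (k:ℕ)) := by
          have hin : ∀ j : Fin (N+1), IntervalIntegrable
              (fun y => ∑ k : Fin (N+1),
                c * f.eval y * ((b j).eval y * x ^ (j:ℕ)) * ((b k).eval y * x ^ (k:ℕ)))
              volume (-R) R := by
            intro j
            have h0 := IntervalIntegrable.sum (μ := volume) (a := -R) (b := R)
              Finset.univ (fun k (_ : k ∈ Finset.univ) => hterm j k)
            have heq : (fun y => ∑ k : Fin (N+1),
                c * f.eval y * ((b j).eval y * x ^ (j:ℕ)) * ((b k).eval y * x ^ (k:ℕ)))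
                = ∑ k : Fin (N+1), fun y =>
                  c * f.eval y * ((b j).eval y * x ^ (j:ℕ)) * ((b k).eval y * x ^ (k:ℕ)) := by
              funext y; simp
            rw [heq]; exact h0
          rw [intervalIntegral.integral_finset_sum (fun j _ => hin j)]
          refine Finset.sum_congr rfl fun j _ => ?_
          rw [intervalIntegral.integral_finset_sum (fun k _ => hterm j k)]
          exact Finset.sum_congr rfl fun k _ => hMx j k
      _ = ∫ y in (-R)..R, c * (s.eval ((x - y) ^ 2 / (4 * σ ^ 2))) ^ 2 * f.eval y := by
          congr 1; funext y
          rw [key x y, sq, Finset.sum_mul_sum]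
          rw [Finset.mul_sum, Finset.sum_mul]
          refine Finset.sum_congr rfl fun j _ => ?_
          rw [Finset.mul_sum, Finset.sum_mul]
          refine Finset.sum_congr rfl fun k _ => ?_
          ring
end

section
/- Let n ≥ 1, let ε ≥ 0, let α ∈ ℕⁿ, and let p_1, …, p_n be univariate real polynomials such that ‖p_i − T_{α_i}‖_{1,cheb} ≤ ε for every i ∈ {1,…,n}. Then the multivariate polynomial Π_{i=1}^n p_i(x_i) satisfies ‖Π_{i=1}^n p_i(x_i) − T_α(x)‖_{1,cheb} ≤ ε · Σ_{i=0}^{n−1} (1+ε)^i. Moreover, if ε ≤ 1/n, then ‖Π_{i=1}^n p_i(x_i) − T_α(x)‖_{1,cheb} ≤ e·ε·n, where e is Euler's number. -/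
open Polynomial Finset

noncomputable def chebOn {n : ℕ} (s : Finset (Fin n)) (β : Fin n → ℕ) : MvPolynomial (Fin n) ℝ :=
  ∏ i ∈ s, Polynomial.aeval (MvPolynomial.X i) (Polynomial.Chebyshev.T ℝ (β i))

noncomputable def norm1 {n : ℕ} (C : (Fin n → ℕ) →₀ ℝ) : ℝ := ∑ β ∈ C.support, |C β|

lemma norm1_eq_sum {n : ℕ} {C : (Fin n → ℕ) →₀ ℝ} {s : Finset (Fin n → ℕ)}
    (h : C.support ⊆ s) : norm1 C = ∑ β ∈ s, |C β| := by
  refine Finset.sum_subset h fun β _ hβ => ?_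
  simp [Finsupp.notMem_support_iff.mp hβ]

lemma norm1_zero {n : ℕ} : norm1 (0 : (Fin n → ℕ) →₀ ℝ) = 0 := by simp [norm1]

lemma norm1_add_le {n : ℕ} (C D : (Fin n → ℕ) →₀ ℝ) : norm1 (C + D) ≤ norm1 C + norm1 D := by
  rw [norm1_eq_sum (s := C.support ∪ D.support) Finsupp.support_add,
    norm1_eq_sum (s := C.support ∪ D.support) Finset.subset_union_left,
    norm1_eq_sum (s := C.support ∪ D.support) Finset.subset_union_right,
    ← Finset.sum_add_distrib]
  exact Finset.sum_le_sum fun β _ => by simpa using abs_add_le (C β) (D β)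

lemma norm1_single_le {n : ℕ} (β : Fin n → ℕ) (a : ℝ) : norm1 (Finsupp.single β a) ≤ |a| := by
  rw [norm1_eq_sum Finsupp.support_single_subset]
  simp

lemma norm1_sum_le {n : ℕ} {ι : Type*} (s : Finset ι) (f : ι → (Fin n → ℕ) →₀ ℝ) :
    norm1 (∑ x ∈ s, f x) ≤ ∑ x ∈ s, norm1 (f x) :=
  Finset.le_sum_of_subadditive norm1 norm1_zero.le norm1_add_le s f

lemma suppSum {n : ℕ} (v : (Fin n → ℕ) → MvPolynomial (Fin n) ℝ) (C : (Fin n → ℕ) →₀ ℝ) :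
    ∑ β ∈ C.support, C β • v β = Finsupp.linearCombination ℝ v C := by
  rw [Finsupp.linearCombination_apply, Finsupp.sum]

lemma key {n : ℕ} (ε : ℝ) (hε : 0 ≤ ε) (α : Fin n → ℕ) (p : Fin n → Polynomial ℝ)
    (m : Fin n → ℕ) (c : Fin n → ℕ → ℝ)
    (hexp : ∀ i, p i - Chebyshev.T ℝ (α i) =
      ∑ k ∈ Finset.range (m i + 1), c i k • Chebyshev.T ℝ k)
    (hnorm : ∀ i, ∑ k ∈ Finset.range (m i + 1), |c i k| ≤ ε)
    (s : Finset (Fin n)) :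
    ∃ C : (Fin n → ℕ) →₀ ℝ,
      (∏ i ∈ s, Polynomial.aeval (MvPolynomial.X i) (p i)) - chebOn s α =
        ∑ β ∈ C.support, C β • chebOn s β ∧ norm1 C ≤ (1 + ε) ^ s.card - 1 := by
  induction s using Finset.induction_on with
  | empty => exact ⟨0, by simp [chebOn], by simp [norm1]⟩
  | @insert j s hj ih =>
    obtain ⟨C, hC, hCn⟩ := ih
    set Tj : ℕ → MvPolynomial (Fin n) ℝ :=
      fun k => Polynomial.aeval (MvPolynomial.X j) (Chebyshev.T ℝ (k : ℤ)) with hTj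
    have hsplit : ∀ (β : Fin n → ℕ) (k : ℕ),
        chebOn (insert j s) (Function.update β j k) = Tj k * chebOn s β := by
      intro β k
      rw [chebOn, Finset.prod_insert hj, Function.update_self]
      congr 1
      refine Finset.prod_congr rfl fun i hi => ?_
      rw [Function.update_of_ne (ne_of_mem_of_not_mem hi hj)]
    have hQ : Polynomial.aeval (MvPolynomial.X j) (p j)
        - Polynomial.aeval (MvPolynomial.X j) (Chebyshev.T ℝ (α j)) =
        ∑ k ∈ Finset.range (m j + 1), c j k • Tj k := by
      rw [← map_sub, hexp j, map_sum]
      simp [hTj]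
    set C₁ : (Fin n → ℕ) →₀ ℝ :=
      ∑ β ∈ C.support, Finsupp.single (Function.update β j (α j)) (C β) with hC₁
    set C₂ : (Fin n → ℕ) →₀ ℝ :=
      ∑ k ∈ Finset.range (m j + 1), Finsupp.single (Function.update α j k) (c j k) with hC₂
    set C₃ : (Fin n → ℕ) →₀ ℝ :=
      ∑ β ∈ C.support, ∑ k ∈ Finset.range (m j + 1),
        Finsupp.single (Function.update β j k) (c j k * C β) with hC₃
    refine ⟨C₁ + C₂ + C₃, ?_, ?_⟩
    · set L := Finsupp.linearCombination ℝ (chebOn (insert j s)) with hL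
      have hL1 : L C₁ = ∑ β ∈ C.support, C β • (Tj (α j) * chebOn s β) := by
        rw [hC₁, map_sum]
        refine Finset.sum_congr rfl fun β _ => ?_
        rw [hL, Finsupp.linearCombination_single, hsplit]
      have hL2 : L C₂ = ∑ k ∈ Finset.range (m j + 1), c j k • (Tj k * chebOn s α) := by
        rw [hC₂, map_sum]
        refine Finset.sum_congr rfl fun k _ => ?_
        rw [hL, Finsupp.linearCombination_single, hsplit]
      have hL3 : L C₃ = ∑ β ∈ C.support, ∑ k ∈ Finset.range (m j + 1),
          (c j k * C β) • (Tj k * chebOn s β) := by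
        rw [hC₃, map_sum]
        refine Finset.sum_congr rfl fun β _ => ?_
        rw [map_sum]
        refine Finset.sum_congr rfl fun k _ => ?_
        rw [hL, Finsupp.linearCombination_single, hsplit]
      rw [suppSum, ← hL, map_add, map_add, hL1, hL2, hL3]
      have hP : (∏ i ∈ s, Polynomial.aeval (MvPolynomial.X i) (p i)) =
          (∑ β ∈ C.support, C β • chebOn s β) + chebOn s α := sub_eq_iff_eq_add.mp hC
      have hins : chebOn (insert j s) α =
          Polynomial.aeval (MvPolynomial.X j) (Chebyshev.T ℝ (α j)) * chebOn s α := by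
        rw [chebOn, Finset.prod_insert hj]; rfl
      rw [Finset.prod_insert hj, hP, hins]
      set A0 : MvPolynomial (Fin n) ℝ := Polynomial.aeval (MvPolynomial.X j) (Chebyshev.T ℝ (α j)) with hA0
      have hQA : Polynomial.aeval (MvPolynomial.X j) (p j) =
          A0 + ∑ k ∈ Finset.range (m j + 1), c j k • Tj k := by
        rw [← hQ]; ring
      rw [hQA]
      have hTjα : Tj (α j) = A0 := by rfl
      rw [hTjα]
      set D := ∑ β ∈ C.support, C β • chebOn s β with hD
      set Q := ∑ k ∈ Finset.range (m j + 1), c j k • Tj k with hQd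
      have e1 : ∑ β ∈ C.support, C β • (A0 * chebOn s β) = A0 * D := by
        rw [hD, Finset.mul_sum]
        exact Finset.sum_congr rfl fun β _ => (mul_smul_comm _ _ _).symm
      have e2 : ∑ k ∈ Finset.range (m j + 1), c j k • (Tj k * chebOn s α) = Q * chebOn s α := by
        rw [hQd, Finset.sum_mul]
        exact Finset.sum_congr rfl fun k _ => (smul_mul_assoc _ _ _).symm
      have e3 : ∑ β ∈ C.support, ∑ k ∈ Finset.range (m j + 1),
          (c j k * C β) • (Tj k * chebOn s β) = Q * D := by
        rw [hQd, hD, Finset.sum_mul_sum, Finset.sum_comm]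
        refine Finset.sum_congr rfl fun β _ => Finset.sum_congr rfl fun k _ => ?_
        rw [smul_mul_smul_comm]
      rw [e1, e2, e3]
      ring
    · have h1 : norm1 C₁ ≤ norm1 C := by
        rw [hC₁]
        refine le_trans (norm1_sum_le _ _) ?_
        rw [norm1]
        exact Finset.sum_le_sum fun β _ => norm1_single_le _ _
      have h2 : norm1 C₂ ≤ ε := by
        refine le_trans (norm1_sum_le _ _) (le_trans ?_ (hnorm j))
        exact Finset.sum_le_sum fun k _ => norm1_single_le _ _
      have h3 : norm1 C₃ ≤ ε * norm1 C := by
        rw [hC₃]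
        refine le_trans (norm1_sum_le _ _) ?_
        rw [norm1, Finset.mul_sum]
        refine Finset.sum_le_sum fun β _ => ?_
        refine le_trans (norm1_sum_le _ _) ?_
        calc ∑ k ∈ Finset.range (m j + 1),
              norm1 (Finsupp.single (Function.update β j k) (c j k * C β))
            ≤ ∑ k ∈ Finset.range (m j + 1), |c j k| * |C β| := by
              refine Finset.sum_le_sum fun k _ => ?_
              simpa [abs_mul] using norm1_single_le (Function.update β j k) (c j k * C β)
          _ = (∑ k ∈ Finset.range (m j + 1), |c j k|) * |C β| := by rw [Finset.sum_mul]
          _ ≤ ε * |C β| := mul_le_mul_of_nonneg_right (hnorm j) (abs_nonneg _)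
      have hC0 : 0 ≤ norm1 C := Finset.sum_nonneg fun _ _ => abs_nonneg _
      have h12 := norm1_add_le C₁ C₂
      have h123 := norm1_add_le (C₁ + C₂) C₃
      rw [Finset.card_insert_of_notMem hj]
      have hcard : ((1:ℝ) + ε) ^ (s.card + 1) - 1 = (1+ε) * ((1+ε)^s.card - 1) + ε := by ring
      rw [hcard]
      nlinarith [hCn]

/-- Let `n ≥ 1`, `ε ≥ 0`, `α ∈ ℕⁿ`, and let `p₁, …, pₙ` be univariate
polynomials with `‖pᵢ - T_{αᵢ}‖_{1,cheb} ≤ ε` for each `i`. Then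
`‖∏ᵢ pᵢ(xᵢ) - T_α(x)‖_{1,cheb} ≤ ε ∑_{i=0}^{n-1} (1+ε)^i`, and if moreover `ε ≤ 1/n` then
`‖∏ᵢ pᵢ(xᵢ) - T_α(x)‖_{1,cheb} ≤ e ε n`. -/
theorem product_kernel_approximate_identity (n : ℕ) (hn : 1 ≤ n) (ε : ℝ) (hε : 0 ≤ ε)
    (α : Fin n → ℕ) (p : Fin n → Polynomial ℝ) (m : Fin n → ℕ) (c : Fin n → ℕ → ℝ)
    (hexp : ∀ i, p i - Chebyshev.T ℝ (α i) =
      ∑ k ∈ Finset.range (m i + 1), c i k • Chebyshev.T ℝ k)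
    (hnorm : ∀ i, ∑ k ∈ Finset.range (m i + 1), |c i k| ≤ ε) :
    ∃ C : (Fin n → ℕ) →₀ ℝ,
      (∏ i, Polynomial.aeval (MvPolynomial.X i) (p i)) - chebMv α =
        ∑ β ∈ C.support, C β • chebMv β ∧
      (∑ β ∈ C.support, |C β|) ≤ ε * ∑ i ∈ Finset.range n, (1 + ε) ^ i ∧
      (ε ≤ 1 / n → (∑ β ∈ C.support, |C β|) ≤ Real.exp 1 * ε * n) := by
  obtain ⟨C, hC, hCn⟩ := key ε hε α p m c hexp hnorm Finset.univ
  have hcard : (Finset.univ : Finset (Fin n)).card = n := by simp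
  rw [hcard] at hCn
  have hgeom : ε * ∑ i ∈ Finset.range n, (1 + ε) ^ i = (1 + ε) ^ n - 1 := by
    have h := geom_sum_mul (1 + ε) n
    have h2 : (1:ℝ) + ε - 1 = ε := by ring
    rw [h2] at h
    rw [mul_comm]; exact h
  have hCn' : (∑ β ∈ C.support, |C β|) ≤ (1 + ε) ^ n - 1 := hCn
  refine ⟨C, hC, by rw [hgeom]; exact hCn', ?_⟩
  intro hε1
  have hn0 : (0:ℝ) < n := by exact_mod_cast Nat.pos_of_ne_zero (by omega)
  have hne : (n:ℝ) ≠ 0 := ne_of_gt hn0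
  have hεn : (n:ℝ) * ε ≤ 1 := by
    have := mul_le_mul_of_nonneg_left hε1 (le_of_lt hn0)
    rwa [show (n:ℝ) * (1 / n) = 1 by field_simp] at this
  have hexpe : (1 + ε) ^ n ≤ Real.exp 1 := by
    calc (1 + ε) ^ n ≤ (Real.exp ε) ^ n := by
          refine pow_le_pow_left₀ (by linarith) ?_ n
          linarith [Real.add_one_le_exp ε]
      _ = Real.exp (n * ε) := by rw [← Real.exp_nat_mul]
      _ ≤ Real.exp 1 := Real.exp_le_exp.mpr hεn
  have hS : ∑ i ∈ Finset.range n, (1 + ε) ^ i ≤ n * Real.exp 1 := by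
    calc ∑ i ∈ Finset.range n, (1 + ε) ^ i ≤ ∑ i ∈ Finset.range n, Real.exp 1 := by
          refine Finset.sum_le_sum fun i hi => ?_
          refine le_trans ?_ hexpe
          exact pow_le_pow_right₀ (by linarith) (le_of_lt (Finset.mem_range.mp hi))
      _ = n * Real.exp 1 := by rw [Finset.sum_const, Finset.card_range]; simp
  calc (∑ β ∈ C.support, |C β|) ≤ (1 + ε) ^ n - 1 := hCn'
    _ = ε * ∑ i ∈ Finset.range n, (1 + ε) ^ i := hgeom.symm
    _ ≤ ε * (n * Real.exp 1) := mul_le_mul_of_nonneg_left hS hε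
    _ = Real.exp 1 * ε * n := by ring
end

section
/- Let R > 0 and d ∈ ℕ be such that R − x ∈ Q((1−x²)³)_d. Then for every integer k ≥ 1, all four polynomials R − xᵏ, R + xᵏ, R − T_k(x), and R + T_k(x) belong to Q((1−x²)³)_{dk}. -/
open Polynomial Finset

/-- Membership in the truncated quadratic module `Q((1-x²)³)_r`: `p = σ₀ + (1-x²)³ σ₁` with
`σ₀, σ₁` sums of squares, `deg σ₀ ≤ r` and `deg σ₁ ≤ r - 6`. -/
def memStengleQM (r : ℕ) (p : Polynomial ℝ) : Prop :=
  ∃ σ₀ σ₁ : Polynomial ℝ, IsSumSq σ₀ ∧ IsSumSq σ₁ ∧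
    σ₀.natDegree ≤ r ∧ σ₁.natDegree ≤ r - 6 ∧
    p = σ₀ + (1 - Polynomial.X ^ 2) ^ 3 * σ₁

section Aux

lemma isSumSq_sq_mul {A : Type*} [CommSemiring A] (x : A) {b : A}
    (hb : IsSumSq b) : IsSumSq (x * x * b) := by
  induction hb with
  | zero => simpa using IsSumSq.zero
  | @sq_add y t ht ih =>
    have : x * x * (y * y + t) = (x * y) * (x * y) + x * x * t := by ring
    rw [this]
    exact IsSumSq.sq_add _ ih

lemma IsSumSq.mul' {A : Type*} [CommSemiring A] {a b : A}
    (ha : IsSumSq a) (hb : IsSumSq b) : IsSumSq (a * b) := by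
  induction ha with
  | zero => simpa using IsSumSq.zero
  | @sq_add x s hs ih =>
    rw [add_mul]
    exact IsSumSq.add (isSumSq_sq_mul x hb) ih

lemma isSumSq_sq {A : Type*} [CommSemiring A] (x : A) : IsSumSq (x ^ 2) := by
  simpa [sq] using IsSumSq.sq_add x 0 IsSumSq.zero

lemma IsSumSq.comp' {p : Polynomial ℝ} (hp : IsSumSq p) (t : Polynomial ℝ) :
    IsSumSq (p.comp t) := by
  induction hp with
  | zero => simpa using IsSumSq.zero
  | @sq_add a s hs ih =>
    rw [add_comp, mul_comp]
    exact IsSumSq.sq_add _ ih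

lemma IsSumSq.eval_nonneg {p : Polynomial ℝ} (hp : IsSumSq p) (x : ℝ) :
    0 ≤ p.eval x := by
  induction hp with
  | zero => simp
  | @sq_add a s hs ih =>
    rw [eval_add, eval_mul]
    exact add_nonneg (mul_self_nonneg _) ih

/-- The hypothesis forces `6 ≤ d`. -/
lemma six_le_of_mem (R : ℝ) (d : ℕ)
    (h : memStengleQM d (Polynomial.C R - Polynomial.X)) : 6 ≤ d := by
  by_contra hd
  push_neg at hd
  obtain ⟨σ₀, σ₁, h₀, h₁, hd₀, hd₁, heq⟩ := h
  have hσ₁0 : σ₁.natDegree = 0 := by omega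
  obtain ⟨c, rfl⟩ : ∃ c, σ₁ = C c := ⟨σ₁.coeff 0, (Polynomial.eq_C_of_natDegree_eq_zero hσ₁0)⟩
  have hC3 : (C (3:ℝ) : Polynomial ℝ) = 3 := map_ofNat C 3
  have hexp : ((1 - X ^ 2 : Polynomial ℝ) ^ 3) = 1 - C 3 * X ^ 2 + C 3 * X ^ 4 - X ^ 6 := by
    rw [hC3]; ring
  have hco : ((1 - X ^ 2 : Polynomial ℝ) ^ 3).coeff 6 = -1 := by
    rw [hexp]
    simp [coeff_sub, coeff_add, coeff_C_mul, coeff_X_pow, coeff_one]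
  have hcoeff : (C R - X : Polynomial ℝ).coeff 6 =
      σ₀.coeff 6 + ((1 - X ^ 2 : Polynomial ℝ) ^ 3 * C c).coeff 6 := by
    rw [heq, coeff_add]
  have hlhs : (C R - X : Polynomial ℝ).coeff 6 = 0 := by
    simp [coeff_sub, coeff_C, coeff_X]
  have hrhs : ((1 - X ^ 2 : Polynomial ℝ) ^ 3 * C c).coeff 6 = -c := by
    rw [coeff_mul_C, hco]; ring
  have hzero : σ₀.coeff 6 = 0 :=
    Polynomial.coeff_eq_zero_of_natDegree_lt (by omega)
  have hc : c = 0 := by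
    rw [hlhs, hzero, hrhs] at hcoeff; linarith
  rw [hc] at heq
  simp only [map_zero, mul_zero, add_zero] at heq
  have := h₀.eval_nonneg (R + 1)
  rw [← heq] at this
  simp at this
  linarith

/-- Composition lemma: composing a certified polynomial with `t` such that
`1 - t² = (1 - X²) u` for a sum of squares `u`. -/
lemma memStengleQM.comp {d : ℕ} {p : Polynomial ℝ} (h : memStengleQM d p)
    (hd6 : 6 ≤ d) (k : ℕ) (hk : 1 ≤ k) (t u : Polynomial ℝ) (hu : IsSumSq u)
    (ht : t.natDegree ≤ k) (hud : u.natDegree ≤ 2 * k - 2)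
    (htu : 1 - t ^ 2 = (1 - Polynomial.X ^ 2) * u) :
    memStengleQM (d * k) (p.comp t) := by
  obtain ⟨σ₀, σ₁, h₀, h₁, hd₀, hd₁, heq⟩ := h
  refine ⟨σ₀.comp t, u ^ 3 * σ₁.comp t, h₀.comp' t, ?_, ?_, ?_, ?_⟩
  · have hrw : u ^ 3 * σ₁.comp t = u * (u * (u * σ₁.comp t)) := by ring
    rw [hrw]
    exact hu.mul' (hu.mul' (hu.mul' (h₁.comp' t)))
  · exact le_trans natDegree_comp_le
      (Nat.mul_le_mul hd₀ ht)
  · have h1 : (u ^ 3).natDegree ≤ 3 * (2 * k - 2) :=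
      le_trans natDegree_pow_le (by omega)
    have h2 : (σ₁.comp t).natDegree ≤ (d - 6) * k :=
      le_trans natDegree_comp_le (Nat.mul_le_mul hd₁ ht)
    have h3 : 3 * (2 * k - 2) + (d - 6) * k ≤ d * k - 6 := by
      obtain ⟨e, rfl⟩ : ∃ e, d = e + 6 := ⟨d - 6, by omega⟩
      rw [Nat.add_sub_cancel, add_mul]
      generalize e * k = m
      omega
    exact le_trans natDegree_mul_le (le_trans (add_le_add h1 h2) h3)
  · rw [heq]
    simp only [add_comp, mul_comp, pow_comp, sub_comp, one_comp, X_comp, htu]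
    ring

lemma natDegree_chebT_le : ∀ n : ℕ, (Chebyshev.T ℝ n).natDegree ≤ n
  | 0 => by simp
  | 1 => by simp
  | (n + 2) => by
    have h1 := natDegree_chebT_le (n + 1)
    have h2 := natDegree_chebT_le n
    have : ((n : ℤ) + 2) = ((n : ℤ)) + 2 := by ring
    have hrec : Chebyshev.T ℝ ((n + 2 : ℕ) : ℤ) =
        2 * X * Chebyshev.T ℝ ((n + 1 : ℕ) : ℤ) - Chebyshev.T ℝ (n : ℤ) := by
      push_cast
      exact Chebyshev.T_add_two ℝ n
    rw [hrec]
    refine le_trans (natDegree_sub_le _ _) ?_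
    refine max_le (le_trans natDegree_mul_le ?_) (by omega)
    have : (2 * X : Polynomial ℝ).natDegree ≤ 1 :=
      le_trans natDegree_mul_le (by simp)
    omega

lemma natDegree_chebU_le : ∀ n : ℕ, (Chebyshev.U ℝ n).natDegree ≤ n
  | 0 => by simp
  | 1 => by
    simp only [Nat.cast_one, Chebyshev.U_one]
    exact le_trans natDegree_mul_le (by simp)
  | (n + 2) => by
    have h1 := natDegree_chebU_le (n + 1)
    have h2 := natDegree_chebU_le n
    have hrec : Chebyshev.U ℝ ((n + 2 : ℕ) : ℤ) =
        2 * X * Chebyshev.U ℝ ((n + 1 : ℕ) : ℤ) - Chebyshev.U ℝ (n : ℤ) := by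
      push_cast
      exact Chebyshev.U_add_two ℝ n
    rw [hrec]
    refine le_trans (natDegree_sub_le _ _) ?_
    refine max_le (le_trans natDegree_mul_le ?_) (by omega)
    have : (2 * X : Polynomial ℝ).natDegree ≤ 1 :=
      le_trans natDegree_mul_le (by simp)
    omega

/-- Determinant identity for Chebyshev `U`. -/
lemma chebU_det (n : ℕ) :
    Chebyshev.U ℝ (n + 2) * Chebyshev.U ℝ n = Chebyshev.U ℝ (n + 1) ^ 2 - 1 := by
  induction n with
  | zero =>
    simp [Chebyshev.U_two]
    ring
  | succ n ih =>
    have ha := Chebyshev.U_add_two ℝ ((n : ℤ) + 1)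
    have hb := Chebyshev.U_add_two ℝ (n : ℤ)
    have hgoal : Chebyshev.U ℝ ((n : ℤ) + 3) * Chebyshev.U ℝ ((n : ℤ) + 1) =
        Chebyshev.U ℝ ((n : ℤ) + 2) ^ 2 - 1 := by
      have ha' : Chebyshev.U ℝ ((n : ℤ) + 3) =
          2 * X * Chebyshev.U ℝ ((n : ℤ) + 2) - Chebyshev.U ℝ ((n : ℤ) + 1) := by
        have := Chebyshev.U_add_two ℝ ((n : ℤ) + 1)
        convert this using 2 <;> ring_nf
      linear_combination Chebyshev.U ℝ ((n:ℤ)+1) * ha' - Chebyshev.U ℝ ((n:ℤ)+2) * hb + ih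
    convert hgoal using 3 <;> push_cast <;> ring_nf
  
/-- Pell identity: `T_{n+1}² + (1 - X²) U_n² = 1`. -/
lemma cheb_pell (n : ℕ) :
    Chebyshev.T ℝ (n + 1) ^ 2 + (1 - X ^ 2) * Chebyshev.U ℝ n ^ 2 = 1 := by
  have hT := Chebyshev.T_eq_U_sub_X_mul_U ℝ ((n : ℤ) + 1)
  have hrec := Chebyshev.U_add_two ℝ (n : ℤ)
  have hdet := chebU_det n
  have h1 : ((n : ℤ) + 1 - 1) = (n : ℤ) := by ring
  rw [h1] at hT
  linear_combination (Chebyshev.T ℝ ((n:ℤ)+1) + Chebyshev.U ℝ ((n:ℤ)+1)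
      - X * Chebyshev.U ℝ (n:ℤ)) * hT + Chebyshev.U ℝ (n:ℤ) * hrec - hdet

end Aux

/-- Let `R > 0` and `d ∈ ℕ` with `R - x ∈ Q((1-x²)³)_d`. Then for every
integer `k ≥ 1`, the polynomials `R - xᵏ`, `R + xᵏ`, `R - T_k(x)` and `R + T_k(x)` all
belong to `Q((1-x²)³)_{dk}`. -/
theorem stengle_module_powers_and_chebyshev (R : ℝ) (hR : 0 < R) (d : ℕ)
    (h : memStengleQM d (Polynomial.C R - Polynomial.X)) (k : ℕ) (hk : 1 ≤ k) :
    memStengleQM (d * k) (Polynomial.C R - Polynomial.X ^ k) ∧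
    memStengleQM (d * k) (Polynomial.C R + Polynomial.X ^ k) ∧
    memStengleQM (d * k) (Polynomial.C R - Chebyshev.T ℝ k) ∧
    memStengleQM (d * k) (Polynomial.C R + Chebyshev.T ℝ k) := by
  have hd6 : 6 ≤ d := six_le_of_mem R d h
  -- the base certificate for R + X
  have hplus : memStengleQM d (Polynomial.C R + Polynomial.X) := by
    have := h.comp hd6 1 le_rfl (-X) 1 (by simpa using isSumSq_sq (1 : Polynomial ℝ))
      (by simp) (by simp) (by ring)
    simpa [comp_assoc, sub_comp, C_comp, X_comp, sub_neg_eq_add] using this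
  -- data for t = X^k
  set u₁ : Polynomial ℝ := ∑ i ∈ range k, X ^ i * X ^ i with hu₁def
  have hu₁ : IsSumSq u₁ := IsSumSq.sum_mul_self _ _
  have hu₁deg : u₁.natDegree ≤ 2 * k - 2 := by
    refine Polynomial.natDegree_sum_le_of_forall_le _ _ ?_
    intro i hi
    simp only [mem_range] at hi
    refine le_trans natDegree_mul_le ?_
    simp only [natDegree_X_pow]
    omega
  have hu₁eq : (1 : Polynomial ℝ) - (X ^ k) ^ 2 = (1 - X ^ 2) * u₁ := by
    have hg := geom_sum_mul (X ^ 2 : Polynomial ℝ) k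
    have : u₁ = ∑ i ∈ range k, (X ^ 2 : Polynomial ℝ) ^ i := by
      rw [hu₁def]
      refine Finset.sum_congr rfl fun i _ => ?_
      ring
    rw [this]
    linear_combination hg
  have hXk : ∀ p : Polynomial ℝ, memStengleQM d p → memStengleQM (d * k) (p.comp (X ^ k)) :=
    fun p hp => hp.comp hd6 k hk (X ^ k) u₁ hu₁ (by simp) hu₁deg hu₁eq
  -- data for t = T_k
  obtain ⟨m, rfl⟩ : ∃ m, k = m + 1 := ⟨k - 1, by omega⟩
  set t₂ : Polynomial ℝ := Chebyshev.T ℝ (m + 1) with ht₂def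
  set u₂ : Polynomial ℝ := Chebyshev.U ℝ m ^ 2 with hu₂def
  have hu₂ : IsSumSq u₂ := isSumSq_sq _
  have hu₂deg : u₂.natDegree ≤ 2 * (m + 1) - 2 := by
    refine le_trans natDegree_pow_le ?_
    have := natDegree_chebU_le m
    omega
  have hu₂eq : (1 : Polynomial ℝ) - t₂ ^ 2 = (1 - X ^ 2) * u₂ := by
    have := cheb_pell m
    rw [ht₂def, hu₂def]
    linear_combination -this
  have ht₂deg : t₂.natDegree ≤ m + 1 := by
    have := natDegree_chebT_le (m + 1)
    rw [ht₂def]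
    exact_mod_cast this
  have hTk : ∀ p : Polynomial ℝ, memStengleQM d p → memStengleQM (d * (m + 1)) (p.comp t₂) :=
    fun p hp => hp.comp hd6 (m + 1) (by omega) t₂ u₂ hu₂ ht₂deg hu₂deg hu₂eq
  have hcast : Chebyshev.T ℝ ((m + 1 : ℕ) : ℤ) = t₂ := by
    rw [ht₂def]; norm_cast
  refine ⟨?_, ?_, ?_, ?_⟩
  · have := hXk _ h
    simpa [sub_comp, C_comp, X_comp] using this
  · have := hXk _ hplus
    simpa [add_comp, C_comp, X_comp] using this
  · have := hTk _ h
    rw [sub_comp, C_comp, X_comp] at this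
    rwa [hcast]
  · have := hTk _ hplus
    rw [add_comp, C_comp, X_comp] at this
    rwa [hcast]
end
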